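/- arXiv:1207.5599 — 3 statements merged into one kernel-verified Lean document; each statement's English description precedes it below -/
import Mathlib

section
/- For any three non-negative integers p, q, r, the identity ∑_{i=0}^{p} C(p,i) / C(p+q+r, r+i) = ((p+q+r+1)/(q+r+1)) · (1 / C(q+r, r)) holds, where C(n,k) denotes the binomial coefficient. -/
/-- The binomial identity
`∑_{i=0}^{p} C(p,i) / C(p+q+r, r+i) = ((p+q+r+1)/(q+r+1)) · (1 / C(q+r, r))`,
taken over the rationals. -/
theorem binomial_reciprocal_sum_identity (p q r : ℕ) :
    ∑ i ∈ Finset.range (p + 1),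
        (p.choose i : ℚ) / ((p + q + r).choose (r + i) : ℚ) =
      ((p : ℚ) + q + r + 1) / ((q : ℚ) + r + 1) * (1 / ((q + r).choose r : ℚ)) := by
  induction p generalizing q r with
  | zero =>
    have h1 : ((q : ℚ) + r + 1) ≠ 0 := by positivity
    simp [div_self h1]
  | succ p ih =>
    rw [Finset.sum_range_succ']
    have hsplit : ∑ i ∈ Finset.range (p + 1),
        ((p + 1).choose (i + 1) : ℚ) / (((p + 1) + q + r).choose (r + (i + 1)) : ℚ)
        = (∑ i ∈ Finset.range (p + 1),
            (p.choose i : ℚ) / ((p + q + (r + 1)).choose ((r + 1) + i) : ℚ))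
          + ∑ i ∈ Finset.range (p + 1),
            (p.choose (i + 1) : ℚ) / (((p + 1) + q + r).choose (r + (i + 1)) : ℚ) := by
      rw [← Finset.sum_add_distrib]
      refine Finset.sum_congr rfl fun i _ => ?_
      have h1 : ((p + 1).choose (i + 1) : ℚ) = (p.choose i : ℚ) + (p.choose (i + 1) : ℚ) := by
        exact_mod_cast Nat.choose_succ_succ p i
      have h2 : (p + 1) + q + r = p + q + (r + 1) := by omega
      have h3 : r + (i + 1) = (r + 1) + i := by omega
      rw [h1, add_div, h2, h3]
    rw [hsplit]
    have hz : p.choose (p + 1) = 0 := Nat.choose_succ_self p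
    have hN : (p + 1) + q + r = p + (q + 1) + r := by omega
    have h2 : (∑ i ∈ Finset.range (p + 1),
          (p.choose (i + 1) : ℚ) / (((p + 1) + q + r).choose (r + (i + 1)) : ℚ))
        + ((p + 1).choose 0 : ℚ) / (((p + 1) + q + r).choose (r + 0) : ℚ)
        = ∑ i ∈ Finset.range (p + 1),
            (p.choose i : ℚ) / ((p + (q + 1) + r).choose (r + i) : ℚ) := by
      have h0 : ((p + 1).choose 0 : ℚ) / (((p + 1) + q + r).choose (r + 0) : ℚ)
          = (p.choose 0 : ℚ) / (((p + 1) + q + r).choose (r + 0) : ℚ) := by simp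
      rw [h0]
      rw [show (∑ i ∈ Finset.range (p + 1),
            (p.choose (i + 1) : ℚ) / (((p + 1) + q + r).choose (r + (i + 1)) : ℚ))
          + (p.choose 0 : ℚ) / (((p + 1) + q + r).choose (r + 0) : ℚ)
          = ∑ j ∈ Finset.range (p + 2),
            (p.choose j : ℚ) / (((p + 1) + q + r).choose (r + j) : ℚ) from
        (Finset.sum_range_succ'
          (fun j => (p.choose j : ℚ) / (((p + 1) + q + r).choose (r + j) : ℚ)) (p + 1)).symm]
      rw [Finset.sum_range_succ, hz, hN]
      simp
    rw [add_assoc, h2, ih q (r + 1), ih (q + 1) r]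
    -- now pure rational arithmetic
    set a : ℚ := ((q + r).choose r : ℚ) with ha_def
    set b : ℚ := ((q + 1 + r).choose r : ℚ) with hb_def
    set c : ℚ := ((q + (r + 1)).choose (r + 1) : ℚ) with hc_def
    have ha : (0 : ℚ) < a := by
      rw [ha_def]; exact_mod_cast Nat.choose_pos (Nat.le_add_left r q)
    have hb : (0 : ℚ) < b := by
      rw [hb_def]; exact_mod_cast Nat.choose_pos (by omega)
    have hc : (0 : ℚ) < c := by
      rw [hc_def]; exact_mod_cast Nat.choose_pos (by omega)
    have f2 : ((q : ℚ) + r + 1) * a = ((r : ℚ) + 1) * c := by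
      have h' : (q + r + 1) * (q + r).choose r = (q + (r + 1)).choose (r + 1) * (r + 1) := by
        have := Nat.add_one_mul_choose_eq (q + r) r
        simpa [Nat.succ_eq_add_one, Nat.add_assoc] using this
      have h'' := congrArg (Nat.cast : ℕ → ℚ) h'
      push_cast at h''
      rw [ha_def, hc_def]
      linarith [h'']
    have f3 : ((q : ℚ) + r + 2) * b = ((r : ℚ) + 1) * (b + c) := by
      have hp : (q + r + 2).choose (r + 1) = (q + 1 + r).choose r + (q + (r + 1)).choose (r + 1) := by
        rw [show q + 1 + r = q + r + 1 from by omega, show q + (r + 1) = q + r + 1 from by omega]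
        exact Nat.choose_succ_succ (q + r + 1) r
      have h' : (q + r + 2) * (q + 1 + r).choose r = (q + r + 2).choose (r + 1) * (r + 1) := by
        have := Nat.add_one_mul_choose_eq (q + r + 1) r
        have e1 : q + 1 + r = q + r + 1 := by omega
        rw [e1]
        simpa [Nat.succ_eq_add_one] using this
      rw [hp] at h'
      have h'' := congrArg (Nat.cast : ℕ → ℚ) h'
      push_cast at h''
      rw [hb_def, hc_def]
      linarith [h'']
    have hq1 : ((q : ℚ) + r + 1) ≠ 0 := by positivity
    have hq2 : ((q : ℚ) + r + 2) ≠ 0 := by positivity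
    push_cast
    have hq3 : ((q : ℚ) + (r + 1) + 1) ≠ 0 := by positivity
    have hq4 : ((q : ℚ) + 1 + r + 1) ≠ 0 := by positivity
    field_simp
    linear_combination (((p : ℚ) + q + r + 2) * ((q : ℚ) + r + 2) * ((b + c) * f2 - c * f3))
end

section
/- Let X be a 2-neighbourly simplicial complex of dimension d on m vertices. Then for 0 ≤ i ≤ d, the mu-vector of X satisfies μ_i = (1/m) ∑_{j=1}^{m} (1/C(m−1, j−1)) ∑_{A ⋖ B ⊆ V(X), |B| = j} β_i(X[B], X[A]), where the inner sum is over all pairs of subsets A ⊆ B of V(X) with |B∖A| = 1, and β_i(X[B], X[A]) = dim H_i(X[B], X[A]; F). -/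
open Finset

/-- An abstract simplicial complex on vertex type `V` (faces include `∅` when nonempty). -/
structure SC (V : Type) where
  faces : Finset (Finset V)
  down_closed : ∀ s ∈ faces, ∀ t, t ⊆ s → t ∈ faces

namespace SC

variable {V : Type} [LinearOrder V] (F : Type) [Field F]

/-- The vertex set. -/
def verts (K : SC V) : Finset V := K.faces.sup id

/-- The faces of cardinality `n` (i.e. of dimension `n-1`). -/
def cf (K : SC V) (n : ℕ) : Finset (Finset V) :=
  K.faces.filter fun s => s.card = n

/-- The induced subcomplex on a vertex set `A`. -/
def ind (K : SC V) (A : Finset V) : SC V where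
  faces := K.faces.filter fun s => s ⊆ A
  down_closed := by
    intro s hs t hts
    simp only [mem_filter] at hs ⊢
    exact ⟨K.down_closed s hs.1 t hts, hts.trans hs.2⟩

/-- The link of a vertex `x`. -/
def lk (K : SC V) (x : V) : SC V where
  faces := (K.faces.filter fun s => x ∈ s).image fun s => s.erase x
  down_closed := by
    intro s hs t hts
    simp only [mem_image, mem_filter] at hs ⊢
    obtain ⟨u, ⟨hu, hxu⟩, rfl⟩ := hs
    have hxt : x ∉ t := fun hx => (Finset.notMem_erase x u) (hts hx)
    refine ⟨insert x t, ⟨K.down_closed u hu _ ?_, mem_insert_self _ _⟩,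
      by rw [Finset.erase_insert hxt]⟩
    intro y hy
    rcases Finset.mem_insert.1 hy with rfl | hy
    · exact hxu
    · exact (Finset.erase_subset x u) (hts hy)

/-- Union of two complexes. -/
def union (K L : SC V) : SC V where
  faces := K.faces ∪ L.faces
  down_closed := by
    intro s hs t hts
    rcases Finset.mem_union.1 hs with h | h
    · exact Finset.mem_union.2 (Or.inl (K.down_closed s h t hts))
    · exact Finset.mem_union.2 (Or.inr (L.down_closed s h t hts))

/-- Intersection of two complexes. -/
def inter (K L : SC V) : SC V where
  faces := K.faces ∩ L.faces
  down_closed := by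
    intro s hs t hts
    have h := Finset.mem_inter.1 hs
    exact Finset.mem_inter.2 ⟨K.down_closed s h.1 t hts, L.down_closed s h.2 t hts⟩

/-- The orientation sign with which the face `t` occurs in the boundary of the face `s`
(using the linear order on the vertices to orient the simplices). -/
def coeff (s t : Finset V) : F :=
  if t ⊆ s then ∑ v ∈ s \ t, (-1 : F) ^ (t.filter (· < v)).card else 0

/-- A generic boundary-type linear map between chain groups spanned by
two finite collections of faces. -/
noncomputable def bd (A B : Finset (Finset V)) :
    ({s // s ∈ A} → F) →ₗ[F] ({s // s ∈ B} → F) where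
  toFun f := fun t => ∑ s : {s // s ∈ A}, coeff F s.1 t.1 * f s
  map_add' f g := by
    funext t
    simp [mul_add, Finset.sum_add_distrib]
  map_smul' c f := by
    funext t
    simp only [Pi.smul_apply, smul_eq_mul, RingHom.id_apply, Finset.mul_sum]
    exact Finset.sum_congr rfl fun s _ => by ring

/-- The group of simplicial `n`-chains of `K` with coefficients in `F`. -/
abbrev Ch (K : SC V) (n : ℕ) : Type := {s // s ∈ K.cf (n + 1)} → F

/-- The simplicial boundary operator from degree `n` to degree `n-1`
(the zero map in degree `0`). -/
noncomputable def D (K : SC V) : (n : ℕ) → Ch F K n →ₗ[F] Ch F K (n - 1)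
  | 0 => 0
  | (n + 1) => bd F (K.cf (n + 2)) (K.cf (n + 1))

/-- The `n`-th Betti number of `K` over `F` :
`dim ker ∂ₙ - dim im ∂ₙ₊₁` (an integer). -/
noncomputable def betti (K : SC V) (n : ℕ) : ℤ :=
  (Module.finrank F (LinearMap.ker (D F K n)) : ℤ) -
    (Module.finrank F (LinearMap.range (D F K (n + 1))) : ℤ)

/-- The `n`-th reduced Betti number of `K` over `F`.  (With this convention the
reduced Betti number in degree `0` of the trivial complex `{∅}` is `-1`.) -/
noncomputable def rbetti (K : SC V) (n : ℕ) : ℤ :=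
  betti F K n - if n = 0 then 1 else 0

/-- The sigma-vector of `K`:  a weighted average of the reduced Betti numbers of the
induced subcomplexes of `K`. -/
noncomputable def sigma (K : SC V) (i : ℕ) : ℚ :=
  ∑ j ∈ Finset.range (K.verts.card + 1),
    (1 / (K.verts.card.choose j : ℚ)) *
      ∑ A ∈ K.verts.powersetCard j, (rbetti F (K.ind A) i : ℚ)

/-- The mu-vector of `K`:  `μ₀ = 1` and
`μᵢ = δ_{i1} + (1/m) ∑_{x ∈ V(K)} σ_{i-1}(lk_K x)` for `i ≥ 1`. -/
noncomputable def mu (K : SC V) (i : ℕ) : ℚ :=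
  if i = 0 then 1
  else (if i = 1 then 1 else 0) +
    (1 / (K.verts.card : ℚ)) * ∑ x ∈ K.verts, sigma F (K.lk x) (i - 1)

/-- `K` has dimension exactly `d`. -/
def dimIs (K : SC V) (d : ℕ) : Prop :=
  (∃ s ∈ K.faces, s.card = d + 1) ∧ ∀ s ∈ K.faces, s.card ≤ d + 1

/-- `K` has the reduced homology of the `d`-sphere over `F`. -/
def sphereBetti (K : SC V) (d : ℕ) : Prop :=
  ∀ i, rbetti F K i = if i = d then 1 else 0

/-- A triangulated `F`-homology `d`-sphere:  it has the homology of `S^d`, and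
(recursively) all its vertex links are homology `(d-1)`-spheres. -/
def IsHomologySphere : (d : ℕ) → SC V → Prop
  | 0, K => dimIs K 0 ∧ sphereBetti F K 0
  | (d + 1), K => dimIs K (d + 1) ∧ sphereBetti F K (d + 1) ∧
      ∀ x ∈ K.verts, IsHomologySphere d (K.lk x)

/-- A triangulated closed `d`-manifold: all vertex links are homology `(d-1)`-spheres
(for `d = 0`, all vertex links are the trivial complex `{∅}`). -/
def IsClosedManifold : (d : ℕ) → SC V → Prop
  | 0, K => dimIs K 0 ∧ ∀ x ∈ K.verts, (K.lk x).faces = {∅}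
  | (d + 1), K => dimIs K (d + 1) ∧ ∀ x ∈ K.verts, IsHomologySphere F d (K.lk x)

/-- Connectedness: nonempty, and any two vertices are joined by a path of edges. -/
def Connected (K : SC V) : Prop :=
  K.verts.Nonempty ∧ ∀ x ∈ K.verts, ∀ y ∈ K.verts,
    Relation.ReflTransGen (fun a b => ({a, b} : Finset V) ∈ K.faces) x y

/-- `K` is `l`-neighbourly: every `l` vertices of `K` form a face. -/
def Neighbourly (K : SC V) (l : ℕ) : Prop :=
  ∀ A ⊆ K.verts, A.card = l → A ∈ K.faces

/-- The inclusion-induced map on chains (for `K` a subcomplex of `L`). -/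
noncomputable def inclCh (K L : SC V) (n : ℕ) (f : Ch F K n) : Ch F L n :=
  fun s => if h : s.1 ∈ K.cf (n + 1) then f ⟨s.1, h⟩ else 0

/-- The inclusion-induced morphism `H_j(K; F) → H_j(L; F)` is injective
(for `K` a subcomplex of `L`):  every `j`-cycle of `K` which bounds in `L`
already bounds in `K`. -/
def HomInj (K L : SC V) (j : ℕ) : Prop :=
  ∀ z : Ch F K j, D F K j z = 0 →
    (∃ w, D F L (j + 1) w = inclCh F K L j z) → ∃ w, D F K (j + 1) w = z

/-- `K` is `F`-tight: connected, and all inclusion-induced maps on homology from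
induced subcomplexes are injective. -/
def IsTight (K : SC V) : Prop :=
  K.Connected ∧ ∀ A ⊆ K.verts, ∀ j, HomInj F (K.ind A) K j

/-- The faces of cardinality `n` of `K` not lying in the subcomplex `L`:
a basis of the relative chain group in dimension `n-1`. -/
def rcf (K L : SC V) (n : ℕ) : Finset (Finset V) :=
  (K.cf n).filter fun s => s ∉ L.faces

/-- Relative chains of the pair `(K, L)`. -/
abbrev RelCh (K L : SC V) (n : ℕ) : Type := {s // s ∈ K.rcf L (n + 1)} → F

/-- The boundary operator of the relative chain complex of the pair `(K, L)`. -/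
noncomputable def relD (K L : SC V) : (n : ℕ) → RelCh F K L n →ₗ[F] RelCh F K L (n - 1)
  | 0 => 0
  | (n + 1) => bd F (K.rcf L (n + 2)) (K.rcf L (n + 1))

/-- The `n`-th relative Betti number `dim H_n(K, L; F)` of the pair `(K, L)`. -/
noncomputable def relBetti (K L : SC V) (n : ℕ) : ℤ :=
  (Module.finrank F (LinearMap.ker (relD F K L n)) : ℤ) -
    (Module.finrank F (LinearMap.range (relD F K L (n + 1))) : ℤ)

/-- The standard `d`-sphere `S^d_{d+2}`: the boundary of a `(d+1)`-simplex. -/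
def IsStdSphere (d : ℕ) (K : SC V) : Prop :=
  ∃ W : Finset V, W.card = d + 2 ∧ ∀ s : Finset V, s ∈ K.faces ↔ s ⊆ W ∧ s ≠ W

/-- `Y` is obtained from the `d`-dimensional complex `X` by the bistellar move
`α ↦ β` of index `i`. -/
def BMove (d i : ℕ) (X Y : SC V) : Prop :=
  ∃ α β : Finset V, Disjoint α β ∧ α.card + i = d + 1 ∧ β.card = i + 1 ∧
    (∀ γ, γ ⊆ α ∪ β → (γ ∈ X.faces ↔ ¬ β ⊆ γ)) ∧
    (∀ γ : Finset V, γ ∈ Y.faces ↔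
      ((γ ∈ X.faces ∧ ¬ (γ ⊆ α ∪ β ∧ ¬ β ⊆ γ)) ∨ (γ ⊆ α ∪ β ∧ ¬ α ⊆ γ)))

/-- `S` is a `k`-stellated `d`-sphere: obtainable from the standard `d`-sphere
by a finite sequence of bistellar moves, each of index `< k`. -/
def IsKStellated (k d : ℕ) (S : SC V) : Prop :=
  ∃ S₀ : SC V, IsStdSphere d S₀ ∧
    Relation.ReflTransGen (fun X Y => ∃ i, i < k ∧ BMove d i X Y) S₀ S

/-- The geometric realization of `K`, as a subspace of `V → ℝ`. -/
def space (K : SC V) : Set (V → ℝ) :=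
  {f | (∀ v, 0 ≤ f v) ∧ ∃ s ∈ K.faces, (∀ v, f v ≠ 0 ↔ v ∈ s) ∧ ∑ v ∈ s, f v = 1}

/-- `K` is a triangulated `e`-ball: its geometric realization is homeomorphic to
the closed unit ball of `ℝᵉ`. -/
def IsBall (e : ℕ) (K : SC V) : Prop :=
  Nonempty (K.space ≃ₜ (Metric.closedBall (0 : EuclideanSpace ℝ (Fin e)) 1))

/-- `K` is a triangulated `(e-1)`-sphere: its geometric realization is homeomorphic
to the unit sphere of `ℝᵉ` (which is empty, `S^{-1}`, when `e = 0`). -/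
def IsSphereDim (e : ℕ) (K : SC V) : Prop :=
  Nonempty (K.space ≃ₜ (Metric.sphere (0 : EuclideanSpace ℝ (Fin e)) 1))

end SC
namespace SC
variable {V : Type} [LinearOrder V] (F : Type) [Field F]

lemma mem_verts_iff {K : SC V} {v : V} : v ∈ K.verts ↔ ∃ s ∈ K.faces, v ∈ s := by
  simp [verts, Finset.mem_sup]

lemma singleton_mem {K : SC V} {v : V} (hv : v ∈ K.verts) : {v} ∈ K.faces := by
  obtain ⟨s, hs, hvs⟩ := mem_verts_iff.1 hv
  exact K.down_closed s hs _ (by simpa)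

lemma mem_lk_faces {K : SC V} {x : V} {t : Finset V} :
    t ∈ (K.lk x).faces ↔ x ∉ t ∧ insert x t ∈ K.faces := by
  constructor
  · rintro ht
    simp only [lk, mem_image, mem_filter] at ht
    obtain ⟨u, ⟨hu, hxu⟩, rfl⟩ := ht
    exact ⟨Finset.notMem_erase _ _, by rwa [Finset.insert_erase hxu]⟩
  · rintro ⟨hxt, hins⟩
    simp only [lk, mem_image, mem_filter]
    exact ⟨insert x t, ⟨hins, mem_insert_self _ _⟩, Finset.erase_insert hxt⟩

lemma mem_cf {K : SC V} {n : ℕ} {s : Finset V} :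
    s ∈ K.cf n ↔ s ∈ K.faces ∧ s.card = n := mem_filter

lemma mem_ind_faces {K : SC V} {A s : Finset V} :
    s ∈ (K.ind A).faces ↔ s ∈ K.faces ∧ s ⊆ A := mem_filter

lemma mem_rcf {K L : SC V} {n : ℕ} {s : Finset V} :
    s ∈ K.rcf L n ↔ (s ∈ K.faces ∧ s.card = n) ∧ s ∉ L.faces := by
  simp [rcf, mem_cf, and_assoc]

end SC
namespace SC
set_option linter.unusedSectionVars false
variable {V : Type} [LinearOrder V] (F : Type) [Field F]

variable (X : SC V) (x : V) (A : Finset V)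

lemma mem_rcf_iff (hxA : x ∉ A) (n : ℕ) (s : Finset V) :
    s ∈ (X.ind (insert x A)).rcf (X.ind A) (n+1) ↔
      s.erase x ∈ ((X.lk x).ind A).cf n ∧ x ∈ s := by
  simp only [mem_rcf, mem_ind_faces, mem_cf, mem_lk_faces]
  constructor
  · rintro ⟨⟨⟨hsf, hsub⟩, hcard⟩, hnot⟩
    have hxs : x ∈ s := by
      by_contra hxs
      exact hnot ⟨hsf, fun v hv => by
        rcases Finset.mem_insert.1 (hsub hv) with rfl | h
        · exact absurd hv hxs
        · exact h⟩
    refine ⟨⟨⟨⟨Finset.notMem_erase _ _, by rwa [Finset.insert_erase hxs]⟩, ?_⟩, ?_⟩, hxs⟩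
    · intro v hv
      have := hsub (Finset.mem_of_mem_erase hv)
      rcases Finset.mem_insert.1 this with rfl | h
      · exact absurd rfl (Finset.ne_of_mem_erase hv)
      · exact h
    · rw [Finset.card_erase_of_mem hxs, hcard]; rfl
  · rintro ⟨⟨⟨⟨hxe, hins⟩, hsub⟩, hcard⟩, hxs⟩
    rw [Finset.insert_erase hxs] at hins
    refine ⟨⟨⟨hins, ?_⟩, ?_⟩, ?_⟩
    · intro v hv
      by_cases hvx : v = x
      · exact hvx ▸ mem_insert_self _ _
      · exact Finset.mem_insert_of_mem (hsub (Finset.mem_erase.2 ⟨hvx, hv⟩))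
    · have h1 := Finset.card_erase_of_mem hxs
      have h2 := Finset.card_pos.2 ⟨x, hxs⟩
      omega
    · rintro ⟨-, hsA⟩
      exact hxA (hsA hxs)

lemma mem_cf_lkind {n : ℕ} {t : Finset V} (ht : t ∈ ((X.lk x).ind A).cf n) : x ∉ t :=
  (mem_lk_faces.1 (mem_ind_faces.1 (mem_cf.1 ht).1).1).1

/-- The face bijection realizing excision. -/
def relE (hxA : x ∉ A) (n : ℕ) :
    {s // s ∈ (X.ind (insert x A)).rcf (X.ind A) (n+1)} ≃
      {t // t ∈ ((X.lk x).ind A).cf n} where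
  toFun s := ⟨s.1.erase x, ((mem_rcf_iff X x A hxA n s.1).1 s.2).1⟩
  invFun t := ⟨insert x t.1, (mem_rcf_iff X x A hxA n _).2
    ⟨by rw [Finset.erase_insert (mem_cf_lkind X x A t.2)]; exact t.2, mem_insert_self _ _⟩⟩
  left_inv s := Subtype.ext
    (Finset.insert_erase ((mem_rcf_iff X x A hxA n s.1).1 s.2).2)
  right_inv t := Subtype.ext (Finset.erase_insert (mem_cf_lkind X x A t.2))

end SC
namespace SC
set_option linter.unusedSectionVars false
variable {V : Type} [LinearOrder V] (F : Type) [Field F]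

lemma neg_one_pow_cancel (k : ℕ) (c : F) : (-1:F)^k * ((-1:F)^k * c) = c := by
  rw [← mul_assoc, ← pow_add, ← two_mul, pow_mul]
  norm_num

lemma coeff_insert {x : V} {t t' : Finset V} (hxt : x ∉ t) (hxt' : x ∉ t')
    (hcard : t'.card = t.card + 1) :
    coeff F (insert x t') (insert x t) =
      (-1:F) ^ (t'.filter (x < ·)).card *
        ((-1:F) ^ (t.filter (x < ·)).card * coeff F t' t) := by
  by_cases hts : t ⊆ t'
  · have hsd : (t' \ t).card = 1 := by
      rw [Finset.card_sdiff_of_subset hts]; omega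
    obtain ⟨v, hv⟩ := Finset.card_eq_one.1 hsd
    have hvmem : v ∈ t' \ t := hv ▸ Finset.mem_singleton_self v
    have hvt : v ∉ t := (Finset.mem_sdiff.1 hvmem).2
    have hvt' : v ∈ t' := (Finset.mem_sdiff.1 hvmem).1
    have hvx : v ≠ x := fun h => hxt' (h ▸ hvt')
    have ht' : t' = insert v t := by
      refine (Finset.eq_of_subset_of_card_le ?_ ?_).symm
      · exact Finset.insert_subset hvt' hts
      · rw [Finset.card_insert_of_notMem hvt]; omega
    subst ht'
    have hsub : insert x t ⊆ insert x (insert v t) :=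
      Finset.insert_subset_insert _ (Finset.subset_insert _ _)
    have hsdiff : insert x (insert v t) \ insert x t = {v} := by
      ext w
      simp only [Finset.mem_sdiff, Finset.mem_insert, Finset.mem_singleton, not_or]
      constructor
      · rintro ⟨h1 | h1 | h1, h2, h3⟩
        · exact absurd h1 h2
        · exact h1
        · exact absurd h1 h3
      · rintro rfl
        exact ⟨Or.inr (Or.inl rfl), hvx, hvt⟩
    rw [coeff, if_pos hsub, hsdiff, coeff, if_pos hts, hv, Finset.sum_singleton,
      Finset.sum_singleton]
    have h1 : (insert x t).filter (· < v) =
        if x < v then insert x (t.filter (· < v)) else t.filter (· < v) :=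
      Finset.filter_insert _ _ _
    have h2 : (insert v t).filter (x < ·) =
        if x < v then insert v (t.filter (x < ·)) else t.filter (x < ·) :=
      Finset.filter_insert _ _ _
    by_cases hxv : x < v
    · rw [h1, if_pos hxv, h2, if_pos hxv,
        Finset.card_insert_of_notMem (fun h => hxt (Finset.mem_filter.1 h).1),
        Finset.card_insert_of_notMem (fun h => hvt (Finset.mem_filter.1 h).1)]
      set a := (t.filter (· < v)).card
      set b := (t.filter (x < ·)).card
      rw [pow_succ, pow_succ]
      rw [show (-1:F)^b * -1 * ((-1:F)^b * (-1:F)^a) = ((-1:F)^b * ((-1:F)^b * (-1:F)^a)) * -1 by ring,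
        neg_one_pow_cancel]
    · rw [h1, if_neg hxv, h2, if_neg hxv, neg_one_pow_cancel]
  · have hsub : ¬ insert x t ⊆ insert x t' := by
      intro h
      apply hts
      intro v hvt
      rcases Finset.mem_insert.1 (h (Finset.mem_insert_of_mem hvt)) with rfl | h'
      · exact absurd hvt hxt
      · exact h'
    rw [coeff, if_neg hsub, coeff, if_neg hts, mul_zero, mul_zero]

end SC
namespace SC
set_option linter.unusedSectionVars false
variable {V : Type} [LinearOrder V] (F : Type) [Field F]
variable (X : SC V) (x : V) (A : Finset V)

/-- The chain-level excision isomorphism, with orientation signs. -/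
noncomputable def relPhi (hxA : x ∉ A) (n : ℕ) :
    RelCh F (X.ind (insert x A)) (X.ind A) n ≃ₗ[F]
      ({t // t ∈ ((X.lk x).ind A).cf n} → F) where
  toFun f t := (-1:F) ^ (t.1.filter (x < ·)).card * f ((relE X x A hxA n).symm t)
  map_add' f g := by funext t; simp [mul_add]
  map_smul' c f := by funext t; simp [smul_eq_mul]; ring
  invFun g s := (-1:F) ^ ((s.1.erase x).filter (x < ·)).card * g (relE X x A hxA n s)
  left_inv f := by
    funext s
    simp only []
    rw [Equiv.symm_apply_apply]
    exact neg_one_pow_cancel F _ _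
  right_inv g := by
    funext t
    simp only []
    rw [Equiv.apply_symm_apply]
    have he : ((relE X x A hxA n).symm t).1.erase x = t.1 :=
      Finset.erase_insert (mem_cf_lkind X x A t.2)
    rw [he]
    exact neg_one_pow_cancel F _ _

lemma relD_conj (hxA : x ∉ A) (n : ℕ)
    (f : RelCh F (X.ind (insert x A)) (X.ind A) (n+1)) :
    relPhi F X x A hxA n (relD F (X.ind (insert x A)) (X.ind A) (n+1) f)
      = bd F (((X.lk x).ind A).cf (n+1)) (((X.lk x).ind A).cf n)
          (relPhi F X x A hxA (n+1) f) := by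
  funext t
  show (-1:F) ^ (t.1.filter (x < ·)).card *
      ∑ s' : {s // s ∈ (X.ind (insert x A)).rcf (X.ind A) (n+2)},
        coeff F s'.1 ((relE X x A hxA n).symm t).1 * f s'
    = ∑ u : {u // u ∈ ((X.lk x).ind A).cf (n+1)},
        coeff F u.1 t.1 *
          ((-1:F) ^ (u.1.filter (x < ·)).card * f ((relE X x A hxA (n+1)).symm u))
  rw [Finset.mul_sum]
  refine Fintype.sum_equiv (relE X x A hxA (n+1)) _ _ ?_
  intro s'
  have hs' := (mem_rcf_iff X x A hxA (n+1) s'.1).1 s'.2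
  have hxmem : x ∈ s'.1 := hs'.2
  have hxu : x ∉ s'.1.erase x := Finset.notMem_erase _ _
  have hxt : x ∉ t.1 := mem_cf_lkind X x A t.2
  have hcard : (s'.1.erase x).card = t.1.card + 1 := by
    have h1 : (s'.1.erase x).card = n + 1 := (mem_cf.1 hs'.1).2
    have h2 : t.1.card = n := (mem_cf.1 t.2).2
    omega
  have hc : coeff F s'.1 (insert x t.1) =
      (-1:F) ^ ((s'.1.erase x).filter (x < ·)).card *
        ((-1:F) ^ (t.1.filter (x < ·)).card * coeff F (s'.1.erase x) t.1) := by
    conv_lhs => rw [show s'.1 = insert x (s'.1.erase x) from (Finset.insert_erase hxmem).symm]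
    exact coeff_insert F hxt hxu hcard
  have h3 : ((relE X x A hxA n).symm t).1 = insert x t.1 := rfl
  have h4 : ((relE X x A hxA (n+1)) s').1 = s'.1.erase x := rfl
  rw [h3, hc, h4, Equiv.symm_apply_apply]
  have hp : (-1:F) ^ (t.1.filter (x < ·)).card * (-1:F) ^ (t.1.filter (x < ·)).card = 1 := by
    rw [← pow_add, ← two_mul, pow_mul]; norm_num
  linear_combination (coeff F (s'.1.erase x) t.1 *
    (-1:F) ^ ((s'.1.erase x).filter (x < ·)).card * f s') * hp

end SC
namespace SC
set_option linter.unusedSectionVars false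
variable {V : Type} [LinearOrder V] (F : Type) [Field F]

lemma finrank_conj {M₁ M₂ N₁ N₂ : Type} [AddCommGroup M₁] [Module F M₁]
    [AddCommGroup M₂] [Module F M₂] [AddCommGroup N₁] [Module F N₁]
    [AddCommGroup N₂] [Module F N₂]
    (e₁ : M₁ ≃ₗ[F] M₂) (e₂ : N₁ ≃ₗ[F] N₂) (f : M₁ →ₗ[F] N₁) (g : M₂ →ₗ[F] N₂)
    (h : ∀ m, e₂ (f m) = g (e₁ m)) :
    Module.finrank F (LinearMap.ker f) = Module.finrank F (LinearMap.ker g) ∧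
    Module.finrank F (LinearMap.range f) = Module.finrank F (LinearMap.range g) := by
  have hg : g = (e₂.toLinearMap.comp f).comp e₁.symm.toLinearMap := by
    ext m
    simp only [LinearMap.comp_apply, LinearEquiv.coe_coe]
    rw [h (e₁.symm m), LinearEquiv.apply_symm_apply]
  constructor
  · rw [hg, LinearMap.comp_assoc, ← LinearMap.comp_assoc]
    rw [show (e₂.toLinearMap.comp f).comp e₁.symm.toLinearMap
        = e₂.toLinearMap.comp (f.comp e₁.symm.toLinearMap) from by
      rw [LinearMap.comp_assoc]]
    rw [LinearEquiv.ker_comp, LinearMap.ker_comp, Submodule.comap_equiv_eq_map_symm,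
      LinearEquiv.symm_symm]
    exact (LinearEquiv.finrank_map_eq e₁ _).symm
  · rw [hg, LinearMap.comp_assoc]
    rw [show e₂.toLinearMap.comp (f.comp e₁.symm.toLinearMap)
        = (e₂.toLinearMap.comp f).comp e₁.symm.toLinearMap from by rw [LinearMap.comp_assoc]]
    rw [LinearEquiv.range_comp, LinearMap.range_comp]
    exact (LinearEquiv.finrank_map_eq e₂ _).symm

lemma finrank_fun (T : Finset (Finset V)) :
    Module.finrank F ({s // s ∈ T} → F) = T.card := by
  rw [Module.finrank_pi, Fintype.card_coe]

end SC
namespace SC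
set_option linter.unusedSectionVars false
variable {V : Type} [LinearOrder V] (F : Type) [Field F]
variable (X : SC V) (x : V) (A : Finset V)

lemma lkind_cf_zero (hx : x ∈ X.verts) : ((X.lk x).ind A).cf 0 = {∅} := by
  ext s
  simp only [mem_cf, mem_ind_faces, mem_lk_faces, Finset.card_eq_zero, Finset.mem_singleton]
  constructor
  · rintro ⟨-, rfl⟩
    rfl
  · rintro rfl
    exact ⟨⟨⟨Finset.notMem_empty x, by simpa using singleton_mem hx⟩,
      Finset.empty_subset _⟩, rfl⟩

lemma lkind_cf_one (h2 : X.Neighbourly 2) (hx : x ∈ X.verts) (hA : A ⊆ X.verts) (hxA : x ∉ A) :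
    ((X.lk x).ind A).cf 1 = A.image (fun v => ({v} : Finset V)) := by
  ext s
  simp only [mem_cf, mem_ind_faces, mem_lk_faces, Finset.card_eq_one, Finset.mem_image]
  constructor
  · rintro ⟨⟨⟨hxs, hins⟩, hsub⟩, v, rfl⟩
    exact ⟨v, hsub (Finset.mem_singleton_self v), rfl⟩
  · rintro ⟨v, hvA, rfl⟩
    have hvx : v ≠ x := fun h => hxA (h ▸ hvA)
    have hxv : x ∉ ({v} : Finset V) := by simp [hvx.symm]
    refine ⟨⟨⟨hxv, ?_⟩, Finset.singleton_subset_iff.2 hvA⟩, v, rfl⟩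
    apply h2
    · intro w hw
      rcases Finset.mem_insert.1 hw with rfl | hw
      · exact hx
      · have hwv : w = v := by simpa using hw
        exact hA (hwv ▸ hvA)
    · rw [Finset.card_insert_of_notMem hxv, Finset.card_singleton]

end SC
namespace SC
set_option linter.unusedSectionVars false
variable {V : Type} [LinearOrder V] (F : Type) [Field F]
variable (X : SC V) (x : V) (A : Finset V)

lemma rank_b0 (h2 : X.Neighbourly 2) (hx : x ∈ X.verts) (hA : A ⊆ X.verts) (hxA : x ∉ A) :
    Module.finrank F (LinearMap.range
      (bd F (((X.lk x).ind A).cf 1) (((X.lk x).ind A).cf 0))) = if A = ∅ then 0 else 1 := by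
  by_cases hAe : A = ∅
  · rw [if_pos hAe]
    have h0 : ((X.lk x).ind A).cf 1 = ∅ := by
      rw [lkind_cf_one X x A h2 hx hA hxA, hAe, Finset.image_empty]
    rw [h0]
    have hrn := LinearMap.finrank_range_add_finrank_ker
      (bd F (∅ : Finset (Finset V)) (((X.lk x).ind A).cf 0))
    rw [finrank_fun, Finset.card_empty] at hrn
    omega
  · rw [if_neg hAe]
    obtain ⟨v, hvA⟩ := Finset.nonempty_iff_ne_empty.2 hAe
    have hsv : ({v} : Finset V) ∈ ((X.lk x).ind A).cf 1 := by
      rw [lkind_cf_one X x A h2 hx hA hxA]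
      exact Finset.mem_image_of_mem _ hvA
    have ht0 : (∅ : Finset V) ∈ ((X.lk x).ind A).cf 0 := by
      rw [lkind_cf_zero X x A hx]; exact Finset.mem_singleton_self _
    apply le_antisymm
    · have h1 := Submodule.finrank_le (LinearMap.range
        (bd F (((X.lk x).ind A).cf 1) (((X.lk x).ind A).cf 0)))
      have hc0 : (((X.lk x).ind A).cf 0).card = 1 := by
        rw [lkind_cf_zero X x A hx]; rfl
      rwa [finrank_fun, hc0] at h1
    · rw [Submodule.one_le_finrank_iff]
      intro hbot
      set g : {s // s ∈ ((X.lk x).ind A).cf 1} → F := Pi.single ⟨{v}, hsv⟩ 1 with hgdef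
      have hg : bd F (((X.lk x).ind A).cf 1) (((X.lk x).ind A).cf 0) g = 0 := by
        have := LinearMap.mem_range_self
          (bd F (((X.lk x).ind A).cf 1) (((X.lk x).ind A).cf 0)) g
        rw [hbot] at this
        simpa using this
      have hval : bd F (((X.lk x).ind A).cf 1) (((X.lk x).ind A).cf 0) g ⟨∅, ht0⟩ = 1 := by
        show (∑ s : {s // s ∈ ((X.lk x).ind A).cf 1},
          coeff F s.1 (∅ : Finset V) * g s) = 1
        rw [Fintype.sum_eq_single (⟨{v}, hsv⟩ : {s // s ∈ ((X.lk x).ind A).cf 1})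
          (fun b hb => by rw [hgdef, Pi.single_eq_of_ne hb, mul_zero])]
        rw [hgdef, Pi.single_eq_same, mul_one, coeff, if_pos (Finset.empty_subset _)]
        simp
      rw [hg] at hval
      simp at hval

lemma relBetti_formula (h2 : X.Neighbourly 2) (hx : x ∈ X.verts) (hA : A ⊆ X.verts)
    (hxA : x ∉ A) (i : ℕ) :
    relBetti F (X.ind (insert x A)) (X.ind A) i =
      if i = 0 then (if A = ∅ then 1 else 0)
      else rbetti F ((X.lk x).ind A) (i-1) + (if i = 1 ∧ A = ∅ then 1 else 0) := by
  have hconj : ∀ k : ℕ,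
      Module.finrank F (LinearMap.ker (relD F (X.ind (insert x A)) (X.ind A) (k+1))) =
        Module.finrank F (LinearMap.ker
          (bd F (((X.lk x).ind A).cf (k+1)) (((X.lk x).ind A).cf k))) ∧
      Module.finrank F (LinearMap.range (relD F (X.ind (insert x A)) (X.ind A) (k+1))) =
        Module.finrank F (LinearMap.range
          (bd F (((X.lk x).ind A).cf (k+1)) (((X.lk x).ind A).cf k))) :=
    fun k => finrank_conj F (relPhi F X x A hxA (k+1)) (relPhi F X x A hxA k)
      _ _ (relD_conj F X x A hxA k)
  have hrcf1 : Module.finrank F (RelCh F (X.ind (insert x A)) (X.ind A) 0) = 1 := by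
    have hc := Fintype.card_congr (relE X x A hxA 0)
    rw [Fintype.card_coe, Fintype.card_coe] at hc
    rw [finrank_fun, hc, lkind_cf_zero X x A hx, Finset.card_singleton]
  have hcf1 : (((X.lk x).ind A).cf 1).card = A.card := by
    rw [lkind_cf_one X x A h2 hx hA hxA,
      Finset.card_image_of_injective _ Finset.singleton_injective]
  match i with
  | 0 =>
    rw [if_pos rfl, relBetti]
    have hker : LinearMap.ker (relD F (X.ind (insert x A)) (X.ind A) 0) = ⊤ :=
      LinearMap.ker_zero
    rw [hker, finrank_top, hrcf1, (hconj 0).2,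
      rank_b0 F X x A h2 hx hA hxA]
    split_ifs <;> norm_num
  | 1 =>
    rw [if_neg one_ne_zero, relBetti, (hconj 0).1, (hconj 1).2]
    have hrb : rbetti F ((X.lk x).ind A) 0
        = (A.card : ℤ)
          - (Module.finrank F (LinearMap.range
              (bd F (((X.lk x).ind A).cf (1+1)) (((X.lk x).ind A).cf 1))) : ℤ) - 1 := by
      have hDb : Module.finrank F (LinearMap.range (D F ((X.lk x).ind A) (0+1)))
          = Module.finrank F (LinearMap.range
              (bd F (((X.lk x).ind A).cf (1+1)) (((X.lk x).ind A).cf 1))) := rfl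
      rw [rbetti, betti, if_pos rfl]
      have hk : LinearMap.ker (D F ((X.lk x).ind A) 0) = ⊤ := LinearMap.ker_zero
      rw [hk, finrank_top, finrank_fun, hDb, hcf1]
    rw [hrb]
    have hrn := LinearMap.finrank_range_add_finrank_ker
      (bd F (((X.lk x).ind A).cf (0+1)) (((X.lk x).ind A).cf 0))
    rw [finrank_fun] at hrn
    have hcf1' : (((X.lk x).ind A).cf (0+1)).card = A.card := hcf1
    rw [hcf1'] at hrn
    have hb0 : Module.finrank F (LinearMap.range
        (bd F (((X.lk x).ind A).cf (0+1)) (((X.lk x).ind A).cf 0)))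
        = if A = ∅ then 0 else 1 := rank_b0 F X x A h2 hx hA hxA
    by_cases hAe : A = ∅
    · rw [if_pos hAe] at hb0
      rw [if_pos ⟨rfl, hAe⟩]
      omega
    · rw [if_neg hAe] at hb0
      rw [if_neg (fun h => hAe h.2)]
      omega
  | (k+2) =>
    rw [if_neg (Nat.succ_ne_zero _), relBetti, (hconj (k+1)).1, (hconj (k+2)).2]
    have hb1 : bd F (((X.lk x).ind A).cf (k+2)) (((X.lk x).ind A).cf (k+1))
        = D F ((X.lk x).ind A) (k+1) := rfl
    have hb2 : bd F (((X.lk x).ind A).cf (k+3)) (((X.lk x).ind A).cf (k+2))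
        = D F ((X.lk x).ind A) (k+2) := rfl
    rw [hb1, hb2, if_neg (by omega : ¬(k+2 = 1 ∧ A = ∅))]
    rw [rbetti, betti]
    simp only [Nat.succ_sub_one]
    rw [if_neg (Nat.succ_ne_zero _)]
    ring

end SC
namespace SC
set_option linter.unusedSectionVars false
variable {V : Type} [LinearOrder V] (F : Type) [Field F]
variable (X : SC V)

lemma lk_verts (h2 : X.Neighbourly 2) {x : V} (hx : x ∈ X.verts) :
    (X.lk x).verts = X.verts.erase x := by
  ext v
  rw [Finset.mem_erase]
  constructor
  · intro hv
    obtain ⟨t, ht, hvt⟩ := mem_verts_iff.1 hv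
    rw [mem_lk_faces] at ht
    exact ⟨fun h => ht.1 (h ▸ hvt),
      mem_verts_iff.2 ⟨insert x t, ht.2, Finset.mem_insert_of_mem hvt⟩⟩
  · rintro ⟨hvx, hv⟩
    have hxv : x ∉ ({v} : Finset V) := by simp [Ne.symm hvx]
    have hface : insert x ({v} : Finset V) ∈ X.faces := by
      apply h2
      · intro w hw
        rcases Finset.mem_insert.1 hw with rfl | hw
        · exact hx
        · have : w = v := by simpa using hw
          exact this ▸ hv
      · rw [Finset.card_insert_of_notMem hxv, Finset.card_singleton]
    exact mem_verts_iff.2 ⟨{v}, mem_lk_faces.2 ⟨hxv, hface⟩, Finset.mem_singleton_self v⟩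

lemma powersetCard_pred {B : Finset V} {j : ℕ} (hB : B.card = j + 1) :
    B.powersetCard j = B.image (fun y => B.erase y) := by
  ext C
  simp only [Finset.mem_powersetCard, Finset.mem_image]
  constructor
  · rintro ⟨hCB, hC⟩
    have hne : (B \ C).Nonempty := by
      rw [← Finset.card_pos, Finset.card_sdiff_of_subset hCB]; omega
    obtain ⟨y, hy⟩ := hne
    have hyB : y ∈ B := (Finset.mem_sdiff.1 hy).1
    have hyC : y ∉ C := (Finset.mem_sdiff.1 hy).2
    refine ⟨y, hyB, (Finset.eq_of_subset_of_card_le ?_ ?_).symm⟩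
    · exact fun w hw => Finset.mem_erase.2 ⟨fun h => hyC (h ▸ hw), hCB hw⟩
    · rw [Finset.card_erase_of_mem hyB, hB, hC]
      omega
  · rintro ⟨y, hyB, rfl⟩
    refine ⟨Finset.erase_subset _ _, ?_⟩
    rw [Finset.card_erase_of_mem hyB, hB]
    omega

lemma sum_pairs (j : ℕ) (g : Finset V → Finset V → ℚ) :
    ∑ B ∈ X.verts.powersetCard (j+1), ∑ C ∈ B.powersetCard j, g B C
      = ∑ y ∈ X.verts, ∑ C ∈ (X.verts.erase y).powersetCard j, g (insert y C) C := by
  have step1 : ∑ B ∈ X.verts.powersetCard (j+1), ∑ C ∈ B.powersetCard j, g B C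
      = ∑ B ∈ X.verts.powersetCard (j+1), ∑ y ∈ B, g B (B.erase y) := by
    refine Finset.sum_congr rfl fun B hB => ?_
    obtain ⟨hBsub, hBcard⟩ := Finset.mem_powersetCard.1 hB
    rw [powersetCard_pred hBcard]
    exact Finset.sum_image fun a ha b hb hab => Finset.erase_injOn B ha hb hab
  have step2 : ∑ B ∈ X.verts.powersetCard (j+1), ∑ y ∈ B, g B (B.erase y)
      = ∑ y ∈ X.verts, ∑ B ∈ (X.verts.powersetCard (j+1)).filter (fun B => y ∈ B),
          g B (B.erase y) := by
    have h1 : ∀ B ∈ X.verts.powersetCard (j+1),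
        ∑ y ∈ B, g B (B.erase y) = ∑ y ∈ X.verts, if y ∈ B then g B (B.erase y) else 0 := by
      intro B hB
      obtain ⟨hBsub, -⟩ := Finset.mem_powersetCard.1 hB
      rw [← Finset.sum_filter, Finset.filter_mem_eq_inter,
        Finset.inter_eq_right.2 hBsub]
    rw [Finset.sum_congr rfl h1, Finset.sum_comm]
    exact Finset.sum_congr rfl fun y _ => (Finset.sum_filter _ _).symm
  have step3 : ∀ y ∈ X.verts,
      (X.verts.powersetCard (j+1)).filter (fun B => y ∈ B)
        = ((X.verts.erase y).powersetCard j).image (insert y) := by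
    intro y hy
    ext B
    simp only [Finset.mem_filter, Finset.mem_powersetCard, Finset.mem_image]
    constructor
    · rintro ⟨⟨hBsub, hBcard⟩, hyB⟩
      refine ⟨B.erase y, ⟨fun w hw => Finset.mem_erase.2
        ⟨Finset.ne_of_mem_erase hw, hBsub (Finset.mem_of_mem_erase hw)⟩, ?_⟩,
        Finset.insert_erase hyB⟩
      rw [Finset.card_erase_of_mem hyB, hBcard]
      omega
    · rintro ⟨C, ⟨hCsub, hCcard⟩, rfl⟩
      have hyC : y ∉ C := fun h => Finset.notMem_erase y X.verts (hCsub h)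
      refine ⟨⟨?_, ?_⟩, Finset.mem_insert_self _ _⟩
      · exact Finset.insert_subset hy (hCsub.trans (Finset.erase_subset _ _))
      · rw [Finset.card_insert_of_notMem hyC, hCcard]
  rw [step1, step2]
  refine Finset.sum_congr rfl fun y hy => ?_
  rw [step3 y hy]
  rw [Finset.sum_image (fun a ha b hb hab => by
    have ha' : y ∉ a := fun h => Finset.notMem_erase y X.verts
      ((Finset.mem_powersetCard.1 ha).1 h)
    have hb' : y ∉ b := fun h => Finset.notMem_erase y X.verts
      ((Finset.mem_powersetCard.1 hb).1 h)
    rw [← Finset.erase_insert ha', ← Finset.erase_insert hb', hab])]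
  refine Finset.sum_congr rfl fun C hC => ?_
  have hyC : y ∉ C := fun h => Finset.notMem_erase y X.verts
    ((Finset.mem_powersetCard.1 hC).1 h)
  rw [Finset.erase_insert hyC]

end SC

/-- Lemma 2.4: for a `2`-neighbourly `d`-dimensional simplicial complex `X` on `m`
vertices, `μ_i = (1/m) ∑_{j=1}^{m} (1/C(m-1,j-1)) ∑_{A ⋖ B, |B| = j} β_i(X[B], X[A])`,
the inner sum ranging over pairs `A ⊆ B ⊆ V(X)` with `|B| = j`, `|B ∖ A| = 1`. -/
theorem mu_as_relative_betti {V : Type} [LinearOrder V] (F : Type) [Field F]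
    (d : ℕ) (X : SC V) (hd : X.dimIs d) (h2 : X.Neighbourly 2) :
    ∀ i ≤ d, SC.mu F X i =
      (1 / (X.verts.card : ℚ)) * ∑ j ∈ Finset.Icc 1 X.verts.card,
        (1 / (((X.verts.card - 1).choose (j - 1)) : ℚ)) *
          ∑ B ∈ X.verts.powersetCard j, ∑ A ∈ B.powersetCard (j - 1),
            (SC.relBetti F (X.ind B) (X.ind A) i : ℚ) := by
  intro i _hi
  obtain ⟨⟨s₀, hs₀, hcard₀⟩, -⟩ := hd
  have hm : 1 ≤ X.verts.card := by
    obtain ⟨v, hv⟩ := Finset.card_pos.1 (show 0 < s₀.card by omega)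
    exact Finset.card_pos.2 ⟨v, SC.mem_verts_iff.2 ⟨s₀, hs₀, hv⟩⟩
  have hmQ : (X.verts.card : ℚ) ≠ 0 := Nat.cast_ne_zero.2 (by omega)
  have hA : ∑ j ∈ Finset.Icc 1 X.verts.card,
      (1 / (((X.verts.card - 1).choose (j - 1)) : ℚ)) *
        ∑ B ∈ X.verts.powersetCard j, ∑ A ∈ B.powersetCard (j - 1),
          (SC.relBetti F (X.ind B) (X.ind A) i : ℚ)
      = ∑ y ∈ X.verts, ∑ j ∈ Finset.range X.verts.card,
          (1 / (((X.verts.card - 1).choose j) : ℚ)) *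
            ∑ C ∈ (X.verts.erase y).powersetCard j,
              (SC.relBetti F (X.ind (insert y C)) (X.ind C) i : ℚ) := by
    rw [← Finset.Ico_add_one_right_eq_Icc, Finset.sum_Ico_eq_sum_range]
    simp only [Nat.succ_sub_one, Nat.add_sub_cancel, Nat.add_sub_cancel_left]
    have h1 : ∀ j ∈ Finset.range X.verts.card,
        (1 / (((X.verts.card - 1).choose j) : ℚ)) *
          ∑ B ∈ X.verts.powersetCard (1+j), ∑ A ∈ B.powersetCard j,
            (SC.relBetti F (X.ind B) (X.ind A) i : ℚ)
        = ∑ y ∈ X.verts, (1 / (((X.verts.card - 1).choose j) : ℚ)) *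
            ∑ C ∈ (X.verts.erase y).powersetCard j,
              (SC.relBetti F (X.ind (insert y C)) (X.ind C) i : ℚ) := by
      intro j _
      rw [add_comm 1 j, SC.sum_pairs X j, Finset.mul_sum]
    rw [Finset.sum_congr rfl h1, Finset.sum_comm]
  rw [hA]
  -- evaluate the correction sums
  have hcorr : ∀ y ∈ X.verts, ∀ P : Prop, ∀ _ : Decidable P,
      ∑ j ∈ Finset.range X.verts.card,
        (1 / (((X.verts.card - 1).choose j) : ℚ)) *
          ∑ C ∈ (X.verts.erase y).powersetCard j, (if P ∧ C = ∅ then (1:ℚ) else 0)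
      = if P then 1 else 0 := by
    intro y hy P _
    by_cases hP : P
    · simp only [hP, true_and, if_true]
      have hj : ∀ j ∈ Finset.range X.verts.card, (1 / (((X.verts.card - 1).choose j) : ℚ)) *
          (∑ C ∈ (X.verts.erase y).powersetCard j, (if C = ∅ then (1:ℚ) else 0))
          = if j = 0 then 1 else 0 := by
        intro j _
        rcases Nat.eq_zero_or_pos j with rfl | hjpos
        · rw [Finset.powersetCard_zero, Finset.sum_singleton, if_pos rfl, if_pos rfl,
            Nat.choose_zero_right]
          norm_num
        · rw [if_neg (by omega), Finset.sum_eq_zero, mul_zero]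
          intro C hC
          have hc := (Finset.mem_powersetCard.1 hC).2
          rw [if_neg]
          rintro rfl
          simp at hc
          omega
      rw [Finset.sum_congr rfl hj, Finset.sum_eq_single 0
        (fun b _ hb => if_neg hb) (fun h => absurd (Finset.mem_range.2 (by omega)) h),
        if_pos rfl]
    · simp only [hP, false_and, if_false]
      rw [Finset.sum_eq_zero]
      intro j _
      rw [Finset.sum_eq_zero (fun C _ => rfl), mul_zero]
  by_cases hi0 : i = 0
  · subst hi0
    have hkey : ∀ y ∈ X.verts, ∑ j ∈ Finset.range X.verts.card,
        (1 / (((X.verts.card - 1).choose j) : ℚ)) *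
          ∑ C ∈ (X.verts.erase y).powersetCard j,
            (SC.relBetti F (X.ind (insert y C)) (X.ind C) 0 : ℚ)
        = 1 := by
      intro y hy
      have := hcorr y hy True inferInstance
      simp only [true_and, if_true] at this
      conv_rhs => rw [← this]
      refine Finset.sum_congr rfl fun j _ => ?_
      refine congrArg (fun z => (1 / (((X.verts.card - 1).choose j) : ℚ)) * z) ?_
      refine Finset.sum_congr rfl fun C hC => ?_
      obtain ⟨hCsub, hCcard⟩ := Finset.mem_powersetCard.1 hC
      have hyC : y ∉ C := fun h => Finset.notMem_erase y X.verts (hCsub h)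
      rw [SC.relBetti_formula F X y C h2 hy (hCsub.trans (Finset.erase_subset _ _)) hyC 0,
        if_pos rfl]
      split_ifs <;> norm_num
    rw [Finset.sum_congr rfl hkey, Finset.sum_const, Nat.smul_one_eq_cast]
    rw [SC.mu, if_pos rfl]
    field_simp
  · rw [SC.mu, if_neg hi0]
    have hkey : ∀ y ∈ X.verts, ∑ j ∈ Finset.range X.verts.card,
        (1 / (((X.verts.card - 1).choose j) : ℚ)) *
          ∑ C ∈ (X.verts.erase y).powersetCard j,
            (SC.relBetti F (X.ind (insert y C)) (X.ind C) i : ℚ)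
        = SC.sigma F (X.lk y) (i - 1) + (if i = 1 then 1 else 0) := by
      intro y hy
      have hstep : ∀ j ∈ Finset.range X.verts.card,
          (1 / (((X.verts.card - 1).choose j) : ℚ)) *
            ∑ C ∈ (X.verts.erase y).powersetCard j,
              (SC.relBetti F (X.ind (insert y C)) (X.ind C) i : ℚ)
          = (1 / (((X.verts.card - 1).choose j) : ℚ)) *
              ∑ C ∈ (X.verts.erase y).powersetCard j,
                (SC.rbetti F ((X.lk y).ind C) (i-1) : ℚ)
            + (1 / (((X.verts.card - 1).choose j) : ℚ)) *
              ∑ C ∈ (X.verts.erase y).powersetCard j,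
                (if i = 1 ∧ C = ∅ then (1:ℚ) else 0) := by
        intro j _
        rw [← mul_add, ← Finset.sum_add_distrib]
        congr 1
        refine Finset.sum_congr rfl fun C hC => ?_
        obtain ⟨hCsub, hCcard⟩ := Finset.mem_powersetCard.1 hC
        have hyC : y ∉ C := fun h => Finset.notMem_erase y X.verts (hCsub h)
        rw [SC.relBetti_formula F X y C h2 hy (hCsub.trans (Finset.erase_subset _ _)) hyC i,
          if_neg hi0]
        push_cast
        split_ifs <;> norm_num
      rw [Finset.sum_congr rfl hstep, Finset.sum_add_distrib, hcorr y hy (i = 1) inferInstance]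
      congr 1
      rw [SC.sigma, SC.lk_verts X h2 hy, Finset.card_erase_of_mem hy,
        Nat.sub_add_cancel hm]
    rw [Finset.sum_congr rfl hkey, Finset.sum_add_distrib, Finset.sum_const,
      nsmul_eq_mul]
    field_simp
    ring
end

section
/- Let X be a 2-neighbourly simplicial complex of dimension d over a field F. Then for every 0 ≤ j ≤ d: (a) ∑_{i=0}^{j} (−1)^{j−i} μ_i ≥ ∑_{i=0}^{j} (−1)^{j−i} β_i, with equality when j = d; and (b) μ_j ≥ β_j. -/
open Finset

namespace Morse
open SC Module LinearMap Finset

variable {V : Type} [LinearOrder V] (F : Type) [Field F]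

/-- rank of a boundary-type map. -/
noncomputable def rk (A B : Finset (Finset V)) : ℕ :=
  Module.finrank F (LinearMap.range (SC.bd F A B))

lemma bd_eq_zero_of_empty {A : Finset (Finset V)} (B : Finset (Finset V)) (hA : A = ∅) :
    SC.bd F A B = 0 := by
  subst hA
  ext f t
  simp [SC.bd]

lemma rk_empty {A : Finset (Finset V)} (B : Finset (Finset V)) (hA : A = ∅) :
    rk F A B = 0 := by
  rw [rk, bd_eq_zero_of_empty F B hA]
  simp

lemma finrank_pi_finset (A : Finset (Finset V)) :
    Module.finrank F ({s // s ∈ A} → F) = A.card := by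
  rw [Module.finrank_pi, Fintype.card_coe]

lemma finrank_ker_bd (A B : Finset (Finset V)) :
    Module.finrank F (LinearMap.ker (SC.bd F A B)) = A.card - rk F A B := by
  have h := LinearMap.finrank_range_add_finrank_ker (SC.bd F A B)
  rw [finrank_pi_finset] at h
  unfold rk
  omega

lemma rk_le_card (A B : Finset (Finset V)) : rk F A B ≤ A.card := by
  have h := LinearMap.finrank_range_add_finrank_ker (SC.bd F A B)
  rw [finrank_pi_finset] at h
  unfold rk
  omega

/-- rank of `D`. -/
noncomputable def rkD (K : SC V) (n : ℕ) : ℕ :=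
  Module.finrank F (LinearMap.range (SC.D F K n))

lemma rkD_zero (K : SC V) : rkD F K 0 = 0 := by
  rw [rkD]
  show Module.finrank F (LinearMap.range (0 : SC.Ch F K 0 →ₗ[F] SC.Ch F K (0-1))) = 0
  simp

lemma rkD_succ (K : SC V) (n : ℕ) :
    rkD F K (n+1) = rk F (K.cf (n+2)) (K.cf (n+1)) := rfl

lemma betti_eq (K : SC V) (n : ℕ) :
    SC.betti F K n = ((K.cf (n+1)).card : ℤ) - rkD F K n - rkD F K (n+1) := by
  have h := LinearMap.finrank_range_add_finrank_ker (SC.D F K n)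
  rw [finrank_pi_finset] at h
  unfold SC.betti rkD
  omega

/-- rank of `relD`. -/
noncomputable def rkRel (K L : SC V) (n : ℕ) : ℕ :=
  Module.finrank F (LinearMap.range (SC.relD F K L n))

lemma rkRel_zero (K L : SC V) : rkRel F K L 0 = 0 := by
  rw [rkRel]
  show Module.finrank F (LinearMap.range (0 : SC.RelCh F K L 0 →ₗ[F] SC.RelCh F K L (0-1))) = 0
  simp

lemma rkRel_succ (K L : SC V) (n : ℕ) :
    rkRel F K L (n+1) = rk F (K.rcf L (n+2)) (K.rcf L (n+1)) := rfl

lemma relBetti_eq (K L : SC V) (n : ℕ) :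
    SC.relBetti F K L n = ((K.rcf L (n+1)).card : ℤ) - rkRel F K L n - rkRel F K L (n+1) := by
  have h := LinearMap.finrank_range_add_finrank_ker (SC.relD F K L n)
  rw [finrank_pi_finset] at h
  unfold SC.relBetti rkRel
  omega

/-- abstract alternating-sum lemma -/
lemma altsum (c r b : ℕ → ℚ) (hr0 : r 0 = 0) (hb : ∀ n, b n = c n - r n - r (n+1)) (j : ℕ) :
    ∑ i ∈ Finset.range (j+1), (-1:ℚ)^(j-i) * b i =
      (∑ i ∈ Finset.range (j+1), (-1:ℚ)^(j-i) * c i) - r (j+1) := by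
  induction j with
  | zero => simp [hb, hr0]
  | succ j ih =>
    rw [Finset.sum_range_succ, Finset.sum_range_succ (f := fun i => (-1:ℚ)^(j+1-i) * c i)]
    have e1 : ∀ i ∈ Finset.range (j+1), (-1:ℚ)^(j+1-i) * b i = -((-1:ℚ)^(j-i) * b i) := by
      intro i hi
      rw [Finset.mem_range] at hi
      rw [show j+1-i = (j-i)+1 by omega, pow_succ]
      ring
    have e2 : ∀ i ∈ Finset.range (j+1), (-1:ℚ)^(j+1-i) * c i = -((-1:ℚ)^(j-i) * c i) := by
      intro i hi
      rw [Finset.mem_range] at hi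
      rw [show j+1-i = (j-i)+1 by omega, pow_succ]
      ring
    rw [Finset.sum_congr rfl e1, Finset.sum_congr rfl e2, Finset.sum_neg_distrib,
      Finset.sum_neg_distrib, ih, hb (j+1)]
    simp
    ring

end Morse

namespace Morse
variable {V : Type} [LinearOrder V] (F : Type) [Field F]

/-- extension by zero -/
noncomputable def extL (A₁ A : Finset (Finset V)) :
    ({s // s ∈ A₁} → F) →ₗ[F] ({s // s ∈ A} → F) where
  toFun f := fun s => if h : s.1 ∈ A₁ then f ⟨s.1, h⟩ else 0
  map_add' f g := by funext s; by_cases h : s.1 ∈ A₁ <;> simp [h]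
  map_smul' c f := by funext s; by_cases h : s.1 ∈ A₁ <;> simp [h]

/-- restriction -/
noncomputable def resL (B B₁ : Finset (Finset V)) (h : B₁ ⊆ B) :
    ({s // s ∈ B} → F) →ₗ[F] ({s // s ∈ B₁} → F) where
  toFun f := fun t => f ⟨t.1, h t.2⟩
  map_add' f g := by funext t; simp
  map_smul' c f := by funext t; simp

lemma sum_coe_fs (A : Finset (Finset V)) (g : Finset V → F) :
    ∑ s : {s // s ∈ A}, g s.1 = ∑ a ∈ A, g a := by
  exact Finset.sum_coe_sort A g

lemma res_bd_ext {A₁ A B₁ B : Finset (Finset V)} (hA : A₁ ⊆ A) (hB : B₁ ⊆ B) :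
    (resL F B B₁ hB) ∘ₗ (SC.bd F A B) ∘ₗ (extL F A₁ A) = SC.bd F A₁ B₁ := by
  apply LinearMap.ext
  intro f
  funext t
  show ∑ s : {s // s ∈ A}, SC.coeff F s.1 t.1 * (extL F A₁ A f) s
      = ∑ s : {s // s ∈ A₁}, SC.coeff F s.1 t.1 * f s
  set g : Finset V → F := fun a => if h : a ∈ A₁ then SC.coeff F a t.1 * f ⟨a, h⟩ else 0 with hg
  have key : ∀ s : {s // s ∈ A}, SC.coeff F s.1 t.1 * (extL F A₁ A f) s = g s.1 := by
    intro s
    by_cases h : s.1 ∈ A₁ <;> simp [extL, hg, h]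
  calc ∑ s : {s // s ∈ A}, SC.coeff F s.1 t.1 * (extL F A₁ A f) s
      = ∑ s : {s // s ∈ A}, g s.1 := Finset.sum_congr rfl (fun s _ => key s)
    _ = ∑ a ∈ A, g a := Finset.sum_coe_sort A g
    _ = ∑ a ∈ A₁, g a := (Finset.sum_subset hA (by intro a _ ha; simp [hg, ha])).symm
    _ = ∑ s : {s // s ∈ A₁}, g s.1 := (Finset.sum_coe_sort A₁ g).symm
    _ = ∑ s : {s // s ∈ A₁}, SC.coeff F s.1 t.1 * f s := by
        apply Finset.sum_congr rfl
        intro s _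
        simp [hg, s.2]

lemma res_bd_ext_zero {A₁ A B₂ B : Finset (Finset V)} (hA : A₁ ⊆ A) (hB : B₂ ⊆ B)
    (hz : ∀ s ∈ A₁, ∀ t ∈ B₂, SC.coeff F s t = 0) :
    (resL F B B₂ hB) ∘ₗ (SC.bd F A B) ∘ₗ (extL F A₁ A) = 0 := by
  apply LinearMap.ext
  intro f
  funext t
  show ∑ s : {s // s ∈ A}, SC.coeff F s.1 t.1 * (extL F A₁ A f) s = 0
  apply Finset.sum_eq_zero
  intro s _
  by_cases h : s.1 ∈ A₁
  · rw [hz s.1 h t.1 t.2]; ring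
  · simp [extL, h]

lemma rank_block (A B : Finset (Finset V)) (p : Finset V → Prop) [DecidablePred p]
    (hz : ∀ s ∈ A, p s → ∀ t ∈ B, ¬ p t → SC.coeff F s t = 0) :
    rk F (A.filter p) (B.filter p) + rk F (A.filter (fun s => ¬ p s)) (B.filter (fun s => ¬ p s))
      ≤ rk F A B := by
  classical
  have hA₁ : A.filter p ⊆ A := Finset.filter_subset _ _
  have hA₂ : A.filter (fun s => ¬ p s) ⊆ A := Finset.filter_subset _ _
  have hB₁ : B.filter p ⊆ B := Finset.filter_subset _ _
  have hB₂ : B.filter (fun s => ¬ p s) ⊆ B := Finset.filter_subset _ _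
  set π := resL F B (B.filter (fun s => ¬ p s)) hB₂ with hπ
  -- key decomposition
  have hdecomp : Module.finrank F (LinearMap.range (SC.bd F A B)) =
      Module.finrank F (LinearMap.range (π ∘ₗ (SC.bd F A B))) +
      Module.finrank F ((LinearMap.range (SC.bd F A B)) ⊓ (LinearMap.ker π) : Submodule F _) := by
    have h := LinearMap.finrank_range_add_finrank_ker
      (π ∘ₗ (LinearMap.range (SC.bd F A B)).subtype)
    rw [LinearMap.range_comp, Submodule.range_subtype] at h
    have hker : LinearMap.ker (π ∘ₗ (LinearMap.range (SC.bd F A B)).subtype)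
        = Submodule.comap (LinearMap.range (SC.bd F A B)).subtype
            ((LinearMap.range (SC.bd F A B)) ⊓ (LinearMap.ker π)) := by
      rw [LinearMap.ker_comp, Submodule.comap_inf, Submodule.comap_subtype_self]
      simp
    have hfr : Module.finrank F (LinearMap.ker (π ∘ₗ (LinearMap.range (SC.bd F A B)).subtype))
        = Module.finrank F
            ((LinearMap.range (SC.bd F A B)) ⊓ (LinearMap.ker π) : Submodule F _) := by
      rw [hker]
      exact (Submodule.comapSubtypeEquivOfLe inf_le_left).finrank_eq
    rw [hfr] at h
    rw [← LinearMap.range_comp] at h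
    omega
  have h2 : rk F (A.filter (fun s => ¬ p s)) (B.filter (fun s => ¬ p s))
      ≤ Module.finrank F (LinearMap.range (π ∘ₗ (SC.bd F A B))) := by
    rw [rk, ← res_bd_ext F hA₂ hB₂, ← hπ, ← LinearMap.comp_assoc]
    apply Submodule.finrank_mono
    exact LinearMap.range_comp_le_range _ _
  have h1 : rk F (A.filter p) (B.filter p) ≤
      Module.finrank F
        ((LinearMap.range (SC.bd F A B)) ⊓ (LinearMap.ker π) : Submodule F _) := by
    rw [rk, ← res_bd_ext F hA₁ hB₁]
    calc Module.finrank F (LinearMap.range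
            ((resL F B (B.filter p) hB₁) ∘ₗ (SC.bd F A B) ∘ₗ extL F (A.filter p) A))
        ≤ Module.finrank F (LinearMap.range ((SC.bd F A B) ∘ₗ extL F (A.filter p) A)) := by
          rw [LinearMap.range_comp ((SC.bd F A B) ∘ₗ extL F (A.filter p) A)
            (resL F B (B.filter p) hB₁)]
          exact Submodule.finrank_map_le _ _
      _ ≤ _ := by
          apply Submodule.finrank_mono
          apply le_inf
          · exact LinearMap.range_comp_le_range _ _
          · rw [LinearMap.range_le_ker_iff, hπ, ← LinearMap.comp_assoc]
            rw [LinearMap.comp_assoc]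
            exact res_bd_ext_zero F hA₁ hB₂ (fun s hs t ht =>
              hz s (hA₁ hs) (Finset.mem_filter.1 hs).2 t (hB₂ ht) (Finset.mem_filter.1 ht).2)
  have : rk F A B = Module.finrank F (LinearMap.range (SC.bd F A B)) := rfl
  omega

end Morse

namespace Morse
variable {V : Type} [LinearOrder V] (F : Type) [Field F]

/-- diagonal-sign reindexing linear equivalence -/
noncomputable def signReindex {A A' : Finset (Finset V)} (eA : {s // s ∈ A} ≃ {s // s ∈ A'})
    (εA : Finset V → F) (hA : ∀ s : {s // s ∈ A}, εA s.1 * εA s.1 = 1) :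
    ({s // s ∈ A} → F) ≃ₗ[F] ({s // s ∈ A'} → F) := by
  refine LinearEquiv.ofLinear
    { toFun := fun f => fun s' => εA (eA.symm s').1 * f (eA.symm s')
      map_add' := by intros; funext s'; simp; ring
      map_smul' := by intros; funext s'; simp; ring }
    { toFun := fun f' => fun s => εA s.1 * f' (eA s)
      map_add' := by intros; funext s; simp; ring
      map_smul' := by intros; funext s; simp; ring } ?_ ?_
  · apply LinearMap.ext; intro f; funext s'
    simp only [LinearMap.comp_apply, LinearMap.coe_mk, AddHom.coe_mk, LinearMap.id_apply]
    rw [← mul_assoc, hA (eA.symm s')]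
    simp
  · apply LinearMap.ext; intro f; funext s
    simp only [LinearMap.comp_apply, LinearMap.coe_mk, AddHom.coe_mk, LinearMap.id_apply]
    rw [Equiv.symm_apply_apply, ← mul_assoc, hA s]
    simp

lemma rk_congr {A B A' B' : Finset (Finset V)}
    (eA : {s // s ∈ A} ≃ {s // s ∈ A'}) (eB : {s // s ∈ B} ≃ {s // s ∈ B'})
    (εA εB : Finset V → F)
    (hA : ∀ s : {s // s ∈ A}, εA s.1 * εA s.1 = 1)
    (hB : ∀ t : {s // s ∈ B}, εB t.1 * εB t.1 = 1)
    (hc : ∀ (s : {s // s ∈ A}) (t : {s // s ∈ B}),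
      SC.coeff F (eA s).1 (eB t).1 = εA s.1 * εB t.1 * SC.coeff F s.1 t.1) :
    rk F A' B' = rk F A B := by
  set TA := signReindex F eA εA hA
  set TB := signReindex F eB εB hB
  have hcomp : (SC.bd F A' B') ∘ₗ (TA : ({s // s ∈ A} → F) →ₗ[F] ({s // s ∈ A'} → F))
      = (TB : ({s // s ∈ B} → F) →ₗ[F] ({s // s ∈ B'} → F)) ∘ₗ SC.bd F A B := by
    apply LinearMap.ext; intro f; funext t'
    show ∑ s' : {s // s ∈ A'}, SC.coeff F s'.1 t'.1 * (TA f) s'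
        = εB (eB.symm t').1 * ∑ s : {s // s ∈ A}, SC.coeff F s.1 (eB.symm t').1 * f s
    have reidx := Fintype.sum_equiv eA
      (fun s => SC.coeff F (eA s).1 t'.1 * (TA f) (eA s))
      (fun s' => SC.coeff F s'.1 t'.1 * (TA f) s') (fun s => rfl)
    rw [← reidx]
    have hTA : ∀ s : {s // s ∈ A}, (TA f) (eA s) = εA s.1 * f s := by
      intro s
      show εA (eA.symm (eA s)).1 * f (eA.symm (eA s)) = εA s.1 * f s
      rw [Equiv.symm_apply_apply]
    rw [Finset.mul_sum]
    apply Finset.sum_congr rfl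
    intro s _
    beta_reduce
    have h1 := hc s (eB.symm t')
    rw [Equiv.apply_symm_apply] at h1
    rw [hTA s, h1, show εA s.1 * εB (eB.symm t').1 * SC.coeff F s.1 (eB.symm t').1 * (εA s.1 * f s)
      = (εA s.1 * εA s.1) * (εB (eB.symm t').1 * (SC.coeff F s.1 (eB.symm t').1 * f s)) from by ring,
      hA s, one_mul]
  have hbd : SC.bd F A' B'
      = (TB : ({s // s ∈ B} → F) →ₗ[F] _) ∘ₗ (SC.bd F A B)
        ∘ₗ (TA.symm : ({s // s ∈ A'} → F) →ₗ[F] _) := by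
    apply LinearMap.ext; intro f'
    have h := LinearMap.congr_fun hcomp (TA.symm f')
    simp only [LinearMap.comp_apply, LinearEquiv.coe_coe] at h ⊢
    rw [TA.apply_symm_apply] at h
    exact h
  rw [rk, rk, hbd]
  rw [LinearMap.range_comp, LinearMap.range_comp]
  rw [LinearEquiv.range, Submodule.map_top]
  exact LinearEquiv.finrank_map_eq TB _
end Morse

namespace Morse
variable {V : Type} [LinearOrder V] (F : Type) [Field F]

lemma mem_verts {K : SC V} {x : V} : x ∈ K.verts ↔ ∃ s ∈ K.faces, x ∈ s := by
  simp [SC.verts, Finset.mem_sup]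

lemma face_subset_verts {K : SC V} {s : Finset V} (hs : s ∈ K.faces) : s ⊆ K.verts :=
  fun x hx => mem_verts.2 ⟨s, hs, hx⟩

lemma singleton_mem_faces {K : SC V} {x : V} (hx : x ∈ K.verts) : ({x} : Finset V) ∈ K.faces := by
  obtain ⟨s, hs, hxs⟩ := mem_verts.1 hx
  exact K.down_closed s hs {x} (Finset.singleton_subset_iff.2 hxs)

lemma empty_mem_faces {K : SC V} (h : K.faces.Nonempty) : ∅ ∈ K.faces := by
  obtain ⟨s, hs⟩ := h
  exact K.down_closed s hs ∅ (Finset.empty_subset s)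

lemma SC_ext {K L : SC V} (h : K.faces = L.faces) : K = L := by
  cases K; cases L; simpa using h

lemma ind_verts_eq (X : SC V) : X.ind X.verts = X := by
  apply SC_ext
  simp only [SC.ind]
  apply Finset.filter_true_of_mem
  intro s hs
  exact face_subset_verts hs

lemma mem_lk_faces {X : SC V} {x : V} {s : Finset V} :
    s ∈ (X.lk x).faces ↔ x ∉ s ∧ insert x s ∈ X.faces := by
  simp only [SC.lk, Finset.mem_image, Finset.mem_filter]
  constructor
  · rintro ⟨u, ⟨hu, hxu⟩, rfl⟩
    refine ⟨Finset.notMem_erase x u, ?_⟩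
    rwa [Finset.insert_erase hxu]
  · rintro ⟨hxs, hf⟩
    exact ⟨insert x s, ⟨hf, Finset.mem_insert_self x s⟩, by rw [Finset.erase_insert hxs]⟩

lemma lk_verts {X : SC V} (h2 : X.Neighbourly 2) {x : V} (hx : x ∈ X.verts) :
    (X.lk x).verts = X.verts.erase x := by
  ext y
  constructor
  · intro hy
    obtain ⟨s, hs, hys⟩ := mem_verts.1 hy
    rw [mem_lk_faces] at hs
    refine Finset.mem_erase.2 ⟨fun hyx => hs.1 (hyx ▸ hys), ?_⟩
    exact face_subset_verts hs.2 (Finset.mem_insert_of_mem hys)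
  · intro hy
    obtain ⟨hyx, hyv⟩ := Finset.mem_erase.1 hy
    have hface : ({x, y} : Finset V) ∈ X.faces := by
      apply h2
      · intro u hu
        rcases Finset.mem_insert.1 hu with rfl | hu
        · exact hx
        · rwa [Finset.mem_singleton.1 hu]
      · rw [Finset.card_insert_of_notMem (by simp [Ne.symm hyx]), Finset.card_singleton]
    apply mem_verts.2
    refine ⟨{y}, mem_lk_faces.2 ⟨by simp [Ne.symm hyx], ?_⟩, Finset.mem_singleton_self y⟩
    simpa using hface

lemma mem_cf {K : SC V} {s : Finset V} {n : ℕ} :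
    s ∈ K.cf n ↔ s ∈ K.faces ∧ s.card = n := Finset.mem_filter

lemma mem_ind_faces {X : SC V} {A : Finset V} {s : Finset V} :
    s ∈ (X.ind A).faces ↔ s ∈ X.faces ∧ s ⊆ A := Finset.mem_filter

lemma mem_rcf_pair {X : SC V} {x : V} {B : Finset V} (hxB : x ∉ B) {s : Finset V} {n : ℕ} :
    s ∈ (X.ind (insert x B)).rcf (X.ind B) n ↔
      s ∈ X.faces ∧ s.card = n ∧ x ∈ s ∧ s.erase x ⊆ B := by
  simp only [SC.rcf, Finset.mem_filter, mem_cf, mem_ind_faces]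
  constructor
  · rintro ⟨⟨⟨hf, hsub⟩, hcard⟩, hnot⟩
    have hxs : x ∈ s := by
      by_contra hxs
      exact hnot ⟨hf, fun u hu => by
        rcases Finset.mem_insert.1 (hsub hu) with rfl | h
        · exact absurd hu hxs
        · exact h⟩
    refine ⟨hf, hcard, hxs, fun u hu => ?_⟩
    obtain ⟨hux, hus⟩ := Finset.mem_erase.1 hu
    rcases Finset.mem_insert.1 (hsub hus) with rfl | h
    · exact absurd rfl hux
    · exact h
  · rintro ⟨hf, hcard, hxs, herase⟩
    refine ⟨⟨⟨hf, ?_⟩, hcard⟩, ?_⟩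
    · intro u hu
      by_cases hux : u = x
      · exact hux ▸ Finset.mem_insert_self x B
      · exact Finset.mem_insert_of_mem (herase (Finset.mem_erase.2 ⟨hux, hu⟩))
    · rintro ⟨-, hsubB⟩
      exact hxB (hsubB hxs)

lemma mem_cf_lk_ind {X : SC V} {x : V} {B : Finset V} {s : Finset V} {n : ℕ} :
    s ∈ ((X.lk x).ind B).cf n ↔
      x ∉ s ∧ insert x s ∈ X.faces ∧ s ⊆ B ∧ s.card = n := by
  simp only [mem_cf, mem_ind_faces, mem_lk_faces]
  tauto

/-- the bijection between the faces of the link-restriction and the relative faces -/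
noncomputable def pairEquiv (X : SC V) (x : V) (B : Finset V) (hxB : x ∉ B) (n : ℕ) :
    {s // s ∈ ((X.lk x).ind B).cf n} ≃
      {s // s ∈ (X.ind (insert x B)).rcf (X.ind B) (n+1)} where
  toFun s := ⟨insert x s.1, by
    obtain ⟨hxs, hf, hsB, hcard⟩ := mem_cf_lk_ind.1 s.2
    refine (mem_rcf_pair hxB).2 ⟨hf, ?_, Finset.mem_insert_self _ _, ?_⟩
    · rw [Finset.card_insert_of_notMem hxs, hcard]
    · rw [Finset.erase_insert hxs]; exact hsB⟩
  invFun t := ⟨t.1.erase x, by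
    obtain ⟨hf, hcard, hxt, herase⟩ := (mem_rcf_pair hxB).1 t.2
    refine mem_cf_lk_ind.2 ⟨Finset.notMem_erase x t.1, ?_, herase, ?_⟩
    · rwa [Finset.insert_erase hxt]
    · rw [Finset.card_erase_of_mem hxt, hcard]
      omega⟩
  left_inv s := by
    obtain ⟨hxs, -, -, -⟩ := mem_cf_lk_ind.1 s.2
    exact Subtype.ext (by simp [Finset.erase_insert hxs])
  right_inv t := by
    obtain ⟨-, -, hxt, -⟩ := (mem_rcf_pair hxB).1 t.2
    exact Subtype.ext (by simp [Finset.insert_erase hxt])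

lemma card_rcf_pair {X : SC V} {x : V} {B : Finset V} (hxB : x ∉ B) (n : ℕ) :
    ((X.ind (insert x B)).rcf (X.ind B) (n+1)).card = (((X.lk x).ind B).cf n).card := by
  rw [← Fintype.card_coe, ← Fintype.card_coe]
  exact (Fintype.card_congr (pairEquiv X x B hxB n)).symm

/-- the key sign lemma -/
lemma coeff_insert (x : V) (s t : Finset V) (hxs : x ∉ s) (hxt : x ∉ t)
    (hcard : s.card = t.card + 1) :
    SC.coeff F (insert x s) (insert x t) =
      ((-1:F)^((s.filter (· < x)).card)) * (-((-1:F)^((t.filter (· < x)).card)))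
        * SC.coeff F s t := by
  by_cases hts : t ⊆ s
  · have hcard1 : (s \ t).card = 1 := by
      rw [Finset.card_sdiff_of_subset hts]; omega
    obtain ⟨v, hv⟩ := Finset.card_eq_one.1 hcard1
    have hvst : v ∈ s \ t := hv ▸ Finset.mem_singleton_self v
    have hvs : v ∈ s := (Finset.mem_sdiff.1 hvst).1
    have hvt : v ∉ t := (Finset.mem_sdiff.1 hvst).2
    have hvx : v ≠ x := fun h => hxs (h ▸ hvs)
    have hinsub : insert x t ⊆ insert x s := Finset.insert_subset_insert x hts
    have hsd2 : insert x s \ insert x t = {v} := by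
      ext u
      simp only [Finset.mem_sdiff, Finset.mem_insert, Finset.mem_singleton, not_or]
      constructor
      · rintro ⟨h1, h2, h3⟩
        rcases h1 with rfl | h1
        · exact absurd rfl h2
        · have : u ∈ s \ t := Finset.mem_sdiff.2 ⟨h1, h3⟩
          rw [hv] at this
          simpa using this
      · rintro rfl
        exact ⟨Or.inr hvs, hvx, hvt⟩
    have hcs : SC.coeff F s t = (-1:F)^((t.filter (· < v)).card) := by
      rw [SC.coeff, if_pos hts, hv, Finset.sum_singleton]
    have hcs2 : SC.coeff F (insert x s) (insert x t)
        = (-1:F)^(((insert x t).filter (· < v)).card) := by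
      rw [SC.coeff, if_pos hinsub, hsd2, Finset.sum_singleton]
    have hst : s = insert v t := by
      ext u
      constructor
      · intro hu
        by_cases h : u ∈ t
        · exact Finset.mem_insert_of_mem h
        · have : u ∈ s \ t := Finset.mem_sdiff.2 ⟨hu, h⟩
          rw [hv] at this
          exact Finset.mem_insert.2 (Or.inl (Finset.mem_singleton.1 this))
      · intro hu
        rcases Finset.mem_insert.1 hu with rfl | h
        · exact hvs
        · exact hts h
    have hfilt_t : ((insert x t).filter (· < v)).card
        = (t.filter (· < v)).card + (if x < v then 1 else 0) := by
      rw [Finset.filter_insert]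
      split_ifs with h
      · rw [Finset.card_insert_of_notMem (fun hmem => hxt (Finset.mem_filter.1 hmem).1)]
      · rfl
    have hfilt_s : ((s.filter (· < x)).card) = (t.filter (· < x)).card + (if v < x then 1 else 0) := by
      rw [hst, Finset.filter_insert]
      split_ifs with h
      · rw [Finset.card_insert_of_notMem (fun hmem => hvt (Finset.mem_filter.1 hmem).1)]
      · rfl
    set a := (t.filter (· < v)).card
    set b := (t.filter (· < x)).card
    have hbb : (-1:F)^b * (-1:F)^b = 1 := by
      rw [← pow_add]
      exact Even.neg_one_pow ⟨b, rfl⟩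
    rw [hcs, hcs2, hfilt_t, hfilt_s]
    rcases lt_or_gt_of_ne hvx with h | h
    · rw [if_neg (asymm h), if_pos h, add_zero]
      rw [show ((-1:F)^(b+1) * (-(-1:F)^b) * (-1:F)^a) = ((-1:F)^b * (-1:F)^b) * (-1:F)^a
        from by ring, hbb, one_mul]
    · rw [if_pos h, if_neg (asymm h), add_zero]
      rw [show ((-1:F)^b * (-(-1:F)^b) * (-1:F)^a) = -(((-1:F)^b * (-1:F)^b) * (-1:F)^a)
        from by ring, hbb]
      ring
  · have h1 : SC.coeff F s t = 0 := by rw [SC.coeff, if_neg hts]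
    have h2 : ¬ insert x t ⊆ insert x s := by
      intro hsub
      apply hts
      intro u hu
      rcases Finset.mem_insert.1 (hsub (Finset.mem_insert_of_mem hu)) with rfl | h
      · exact absurd hu hxt
      · exact h
    rw [SC.coeff, if_neg h2, h1, mul_zero]

end Morse

namespace Morse
variable {V : Type} [LinearOrder V] (F : Type) [Field F]

lemma rk_le_card_target (A B : Finset (Finset V)) : rk F A B ≤ B.card := by
  rw [rk, ← finrank_pi_finset (V := V) F B]
  exact Submodule.finrank_le _

lemma rkRel_pair_eq_rkD_lk {X : SC V} {x : V} {B : Finset V} (hxB : x ∉ B) (n : ℕ) :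
    rkRel F (X.ind (insert x B)) (X.ind B) (n+2) = rkD F ((X.lk x).ind B) (n+1) := by
  rw [rkRel_succ, rkD_succ]
  apply rk_congr F (pairEquiv X x B hxB (n+2)) (pairEquiv X x B hxB (n+1))
    (fun s => (-1:F)^((s.filter (· < x)).card))
    (fun t => -((-1:F)^((t.filter (· < x)).card)))
  · intro s
    rw [← pow_add]
    exact Even.neg_one_pow ⟨_, rfl⟩
  · intro t
    rw [neg_mul_neg, ← pow_add]
    exact Even.neg_one_pow ⟨_, rfl⟩
  · intro s t
    obtain ⟨hxs, -, hsB, hcs⟩ := mem_cf_lk_ind.1 s.2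
    obtain ⟨hxt, -, htB, hct⟩ := mem_cf_lk_ind.1 t.2
    show SC.coeff F (insert x s.1) (insert x t.1) = _
    rw [coeff_insert F x s.1 t.1 hxs hxt (by omega)]

lemma rcf_pair_one {X : SC V} {x : V} {B : Finset V} (hxB : x ∉ B) (hx : x ∈ X.verts) :
    (X.ind (insert x B)).rcf (X.ind B) 1 = {({x} : Finset V)} := by
  ext s
  rw [mem_rcf_pair hxB, Finset.mem_singleton]
  constructor
  · rintro ⟨-, hcard, hxs, -⟩
    obtain ⟨a, rfl⟩ := Finset.card_eq_one.1 hcard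
    rw [Finset.mem_singleton.1 hxs]
  · rintro rfl
    exact ⟨singleton_mem_faces hx, Finset.card_singleton x, Finset.mem_singleton_self x,
      by simp⟩

lemma pair_edge {X : SC V} (h2 : X.Neighbourly 2) {x y : V}
    (hx : x ∈ X.verts) (hy : y ∈ X.verts) (hxy : x ≠ y) : ({x, y} : Finset V) ∈ X.faces := by
  apply h2
  · intro u hu
    rcases Finset.mem_insert.1 hu with rfl | hu
    · exact hx
    · rwa [Finset.mem_singleton.1 hu]
  · rw [Finset.card_insert_of_notMem (by simp [hxy]), Finset.card_singleton]

lemma rkRel_pair_one {X : SC V} (h2 : X.Neighbourly 2) {x : V} {B : Finset V}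
    (hx : x ∈ X.verts) (hB : B ⊆ X.verts.erase x) :
    rkRel F (X.ind (insert x B)) (X.ind B) 1 = if B = ∅ then 0 else 1 := by
  have hxB : x ∉ B := fun h => (Finset.mem_erase.1 (hB h)).1 rfl
  rw [rkRel_succ]
  split_ifs with hBe
  · apply rk_empty
    subst hBe
    ext s
    rw [mem_rcf_pair hxB]
    simp only [Finset.notMem_empty, iff_false, not_and]
    rintro - hcard hxs herase
    have h1 : s.erase x = ∅ := Finset.subset_empty.1 herase
    have h2 : (s.erase x).card = s.card - 1 := Finset.card_erase_of_mem hxs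
    rw [h1, Finset.card_empty] at h2
    omega
  · obtain ⟨y, hyB⟩ := Finset.nonempty_iff_ne_empty.2 hBe
    have hyv : y ∈ X.verts := Finset.mem_of_mem_erase (hB hyB)
    have hxy : x ≠ y := fun h => (Finset.mem_erase.1 (hB hyB)).1 h.symm
    have hedge : ({x, y} : Finset V) ∈ (X.ind (insert x B)).rcf (X.ind B) 2 := by
      rw [mem_rcf_pair hxB]
      refine ⟨pair_edge h2 hx hyv hxy, ?_, Finset.mem_insert_self x _, ?_⟩
      · rw [Finset.card_insert_of_notMem (by simp [hxy]), Finset.card_singleton]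
      · intro u hu
        obtain ⟨hux, hus⟩ := Finset.mem_erase.1 hu
        rcases Finset.mem_insert.1 hus with rfl | hus
        · exact absurd rfl hux
        · rwa [Finset.mem_singleton.1 hus]
    have hxmem : ({x} : Finset V) ∈ (X.ind (insert x B)).rcf (X.ind B) 1 := by
      rw [rcf_pair_one hxB hx]; exact Finset.mem_singleton_self _
    apply le_antisymm
    · calc rk F _ _ ≤ ((X.ind (insert x B)).rcf (X.ind B) 1).card := rk_le_card_target F _ _
        _ = 1 := by rw [rcf_pair_one hxB hx]; exact Finset.card_singleton _
    · rw [Nat.one_le_iff_ne_zero]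
      intro h0
      rw [rk, Submodule.finrank_eq_zero] at h0
      classical
      set s₀ : {s // s ∈ (X.ind (insert x B)).rcf (X.ind B) 2} := ⟨{x,y}, hedge⟩
      set f : {s // s ∈ (X.ind (insert x B)).rcf (X.ind B) 2} → F :=
        fun s => if s = s₀ then 1 else 0
      have hmem2 : SC.bd F _ _ f ∈ LinearMap.range
          (SC.bd F ((X.ind (insert x B)).rcf (X.ind B) 2) ((X.ind (insert x B)).rcf (X.ind B) 1)) :=
        LinearMap.mem_range_self _ f
      rw [h0, Submodule.mem_bot] at hmem2
      have hval := congr_fun hmem2 ⟨{x}, hxmem⟩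
      have hcompute : SC.bd F ((X.ind (insert x B)).rcf (X.ind B) 2)
          ((X.ind (insert x B)).rcf (X.ind B) 1) f ⟨{x}, hxmem⟩
          = SC.coeff F ({x,y} : Finset V) ({x} : Finset V) := by
        show (∑ s : {s // s ∈ _}, SC.coeff F s.1 ({x} : Finset V) * f s) = _
        rw [Finset.sum_eq_single s₀]
        · simp [f, s₀]
        · intro b _ hb
          simp [f, hb]
        · intro hs
          exact absurd (Finset.mem_univ s₀) hs
      have hsub : ({x} : Finset V) ⊆ ({x, y} : Finset V) := by
        intro u hu
        rw [Finset.mem_singleton.1 hu]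
        exact Finset.mem_insert_self _ _
      have hsd : ({x, y} : Finset V) \ ({x} : Finset V) = {y} := by
        ext u
        simp only [Finset.mem_sdiff, Finset.mem_insert, Finset.mem_singleton]
        constructor
        · rintro ⟨rfl | h, h2⟩
          · exact absurd rfl h2
          · exact h
        · rintro rfl
          exact ⟨Or.inr rfl, fun h => hxy h.symm⟩
      have hcoeff : SC.coeff F ({x,y} : Finset V) ({x} : Finset V) ≠ 0 := by
        rw [SC.coeff, if_pos hsub, hsd, Finset.sum_singleton]
        intro h
        have := pow_ne_zero ((({x}: Finset V).filter (· < y)).card) (by norm_num : (-1:F) ≠ 0)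
        exact this h
      rw [hval] at hcompute
      exact hcoeff (by simpa using hcompute.symm)

lemma card_rcf_pair_one {X : SC V} {x : V} {B : Finset V} (hxB : x ∉ B) (hx : x ∈ X.verts) :
    ((X.ind (insert x B)).rcf (X.ind B) 1).card = 1 := by
  rw [rcf_pair_one hxB hx, Finset.card_singleton]

end Morse

namespace Morse
variable {V : Type} [LinearOrder V] (F : Type) [Field F]

lemma betti_altsum (K : SC V) (j : ℕ) :
    ∑ i ∈ Finset.range (j+1), (-1:ℚ)^(j-i) * (SC.betti F K i : ℚ)
      = (∑ i ∈ Finset.range (j+1), (-1:ℚ)^(j-i) * ((K.cf (i+1)).card : ℚ))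
        - (rkD F K (j+1) : ℚ) := by
  apply altsum (fun i => ((K.cf (i+1)).card : ℚ)) (fun n => (rkD F K n : ℚ))
  · rw [rkD_zero]; norm_num
  · intro n
    have := betti_eq F K n
    push_cast [this]
    ring

lemma relBetti_altsum (K L : SC V) (j : ℕ) :
    ∑ i ∈ Finset.range (j+1), (-1:ℚ)^(j-i) * (SC.relBetti F K L i : ℚ)
      = (∑ i ∈ Finset.range (j+1), (-1:ℚ)^(j-i) * ((K.rcf L (i+1)).card : ℚ))
        - (rkRel F K L (j+1) : ℚ) := by
  apply altsum (fun i => ((K.rcf L (i+1)).card : ℚ)) (fun n => (rkRel F K L n : ℚ))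
  · rw [rkRel_zero]; norm_num
  · intro n
    have := relBetti_eq F K L n
    push_cast [this]
    ring

lemma rbetti_sum_eq (K : SC V) (n : ℕ) :
    ∑ i ∈ Finset.range (n+1), (-1:ℚ)^(n-i) * (SC.rbetti F K i : ℚ)
      = (∑ i ∈ Finset.range (n+1), (-1:ℚ)^(n-i) * (SC.betti F K i : ℚ)) - (-1:ℚ)^n := by
  have key : ∀ i, (SC.rbetti F K i : ℚ)
      = (SC.betti F K i : ℚ) - (if i = 0 then 1 else 0) := by
    intro i
    rw [SC.rbetti]
    split_ifs with h <;> push_cast <;> ring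
  calc ∑ i ∈ Finset.range (n+1), (-1:ℚ)^(n-i) * (SC.rbetti F K i : ℚ)
      = ∑ i ∈ Finset.range (n+1), ((-1:ℚ)^(n-i) * (SC.betti F K i : ℚ)
          - (if i = 0 then (-1:ℚ)^(n-i) else 0)) := by
        apply Finset.sum_congr rfl
        intro i _
        rw [key i]
        split_ifs with h <;> ring
    _ = _ := by
        rw [Finset.sum_sub_distrib, Finset.sum_ite_eq' (Finset.range (n+1)) 0
          (fun i => (-1:ℚ)^(n-i))]
        simp

/-- per-(x,B) identity converting the link rbetti-sum into relative data -/
lemma linkT {X : SC V} (h2 : X.Neighbourly 2) {x : V} {B : Finset V}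
    (hx : x ∈ X.verts) (hB : B ⊆ X.verts.erase x) (n : ℕ) :
    ∑ i ∈ Finset.range (n+1), (-1:ℚ)^(n-i) * (SC.rbetti F ((X.lk x).ind B) i : ℚ)
      = (∑ i ∈ Finset.range (n+2), (-1:ℚ)^(n+1-i)
          * (((X.ind (insert x B)).rcf (X.ind B) (i+1)).card : ℚ))
        - (rkRel F (X.ind (insert x B)) (X.ind B) (n+2) : ℚ)
        - ((-1:ℚ)^(n+1) + (-1:ℚ)^n) := by
  have hxB : x ∉ B := fun h => (Finset.mem_erase.1 (hB h)).1 rfl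
  rw [rbetti_sum_eq, betti_altsum]
  rw [Finset.sum_range_succ' (fun i => (-1:ℚ)^(n+1-i)
    * (((X.ind (insert x B)).rcf (X.ind B) (i+1)).card : ℚ)) (n+1)]
  have e1 : ∀ i ∈ Finset.range (n+1), (-1:ℚ)^(n+1-(i+1))
      * (((X.ind (insert x B)).rcf (X.ind B) (i+1+1)).card : ℚ)
      = (-1:ℚ)^(n-i) * ((((X.lk x).ind B).cf (i+1)).card : ℚ) := by
    intro i _
    rw [show n+1-(i+1) = n-i from by omega, card_rcf_pair hxB (i+1)]
  rw [Finset.sum_congr rfl e1]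
  rw [card_rcf_pair_one hxB hx]
  rw [rkRel_pair_eq_rkD_lk F hxB n]
  push_cast
  ring

end Morse

namespace Morse
variable {V : Type} [LinearOrder V] (F : Type) [Field F]

lemma card_filter_powersetCard (S T : Finset V) (hST : S ⊆ T) (k : ℕ) :
    (((Finset.powersetCard k T).filter (fun B => S ⊆ B)).card : ℚ)
      = if S.card ≤ k then ((T.card - S.card).choose (k - S.card) : ℚ) else 0 := by
  classical
  split_ifs with h
  · norm_cast
    rw [← Finset.card_sdiff_of_subset hST, ← Finset.card_powersetCard (k - S.card) (T \ S)]
    apply Finset.card_nbij' (fun B => B \ S) (fun C => C ∪ S)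
    · intro B hB
      obtain ⟨hBP, hSB⟩ := Finset.mem_filter.1 hB
      obtain ⟨hBT, hBc⟩ := Finset.mem_powersetCard.1 hBP
      apply Finset.mem_powersetCard.2
      constructor
      · exact Finset.sdiff_subset_sdiff hBT (le_refl S)
      · rw [Finset.card_sdiff_of_subset hSB, hBc]
    · intro C hC
      obtain ⟨hCT, hCc⟩ := Finset.mem_powersetCard.1 hC
      have hdisj : Disjoint C S := by
        rw [Finset.disjoint_left]
        intro a haC haS
        exact (Finset.mem_sdiff.1 (hCT haC)).2 haS
      apply Finset.mem_filter.2
      refine ⟨Finset.mem_powersetCard.2 ⟨?_, ?_⟩, Finset.subset_union_right⟩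
      · apply Finset.union_subset
        · exact hCT.trans (Finset.sdiff_subset)
        · exact hST
      · rw [Finset.card_union_of_disjoint hdisj, hCc]
        omega
    · intro B hB
      obtain ⟨-, hSB⟩ := Finset.mem_filter.1 hB
      exact Finset.sdiff_union_of_subset hSB
    · intro C hC
      obtain ⟨hCT, -⟩ := Finset.mem_powersetCard.1 hC
      have hdisj : Disjoint C S := by
        rw [Finset.disjoint_left]
        intro a haC haS
        exact (Finset.mem_sdiff.1 (hCT haC)).2 haS
      show (C ∪ S) \ S = C
      rw [Finset.union_sdiff_distrib, Finset.sdiff_self, Finset.union_empty,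
        Finset.sdiff_eq_self_of_disjoint hdisj]
  · rw [Nat.cast_eq_zero]
    rw [Finset.card_eq_zero, Finset.filter_eq_empty_iff]
    intro B hB
    obtain ⟨-, hBc⟩ := Finset.mem_powersetCard.1 hB
    intro hSB
    exact h (hBc ▸ Finset.card_le_card hSB)

lemma binom_avg (M r : ℕ) (hrM : r ≤ M) :
    ∑ j ∈ Finset.range (M+1), (1/(M.choose j : ℚ)) *
      (if r ≤ j then (((M - r).choose (j - r) : ℚ)) else 0)
      = (M+1)/(r+1) := by
  have hMr : (M.choose r : ℚ) ≠ 0 := by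
    exact_mod_cast (Nat.choose_pos hrM).ne'
  have key : ∀ j ∈ Finset.range (M+1), (1/(M.choose j : ℚ)) *
      (if r ≤ j then (((M - r).choose (j - r) : ℚ)) else 0)
      = (if r ≤ j then ((j.choose r : ℚ)) else 0) / (M.choose r : ℚ) := by
    intro j hj
    rw [Finset.mem_range] at hj
    have hjM : j ≤ M := by omega
    split_ifs with h
    · have hMj : (M.choose j : ℚ) ≠ 0 := by
        exact_mod_cast (Nat.choose_pos hjM).ne'
      have hnat : M.choose j * j.choose r = M.choose r * (M - r).choose (j - r) :=
        Nat.choose_mul h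
      have hq : (M.choose j : ℚ) * (j.choose r : ℚ)
          = (M.choose r : ℚ) * ((M - r).choose (j - r) : ℚ) := by
        exact_mod_cast congrArg (Nat.cast : ℕ → ℚ) hnat
      field_simp
      linarith [hq]
    · simp
  rw [Finset.sum_congr rfl key, ← Finset.sum_div]
  have hsum : ∑ j ∈ Finset.range (M+1), (if r ≤ j then ((j.choose r : ℚ)) else 0)
      = ((M+1).choose (r+1) : ℚ) := by
    rw [← Finset.sum_filter]
    have hIcc : (Finset.range (M+1)).filter (fun j => r ≤ j) = Finset.Icc r M := by
      ext j
      simp only [Finset.mem_filter, Finset.mem_range, Finset.mem_Icc]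
      omega
    rw [hIcc]
    exact_mod_cast congrArg (Nat.cast : ℕ → ℚ) (Nat.sum_Icc_choose M r)
  rw [hsum]
  have hnat2 := Nat.add_one_mul_choose_eq M r
  have hq2 : ((M:ℚ)+1) * (M.choose r : ℚ) = ((M+1).choose (r+1) : ℚ) * ((r:ℚ)+1) := by
    exact_mod_cast congrArg (Nat.cast : ℕ → ℚ) hnat2
  have hr1 : ((r:ℚ)+1) ≠ 0 := by positivity
  field_simp
  linarith [hq2]

lemma rcf_pair_filter {X : SC V} {x : V} {B : Finset V} (hxB : x ∉ B) (n : ℕ) :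
    (X.ind (insert x B)).rcf (X.ind B) n
      = (X.cf n).filter (fun s => x ∈ s ∧ s.erase x ⊆ B) := by
  ext s
  rw [mem_rcf_pair hxB, Finset.mem_filter, mem_cf]
  tauto

lemma weightcard (X : SC V) {n : ℕ} (hn : 1 ≤ n) (hm : X.verts.Nonempty) :
    (1/(X.verts.card : ℚ)) * ∑ x ∈ X.verts, ∑ j' ∈ Finset.range X.verts.card,
      (1/(((X.verts.card - 1).choose j' : ℕ) : ℚ)) *
        ∑ B ∈ Finset.powersetCard j' (X.verts.erase x),
          (((X.ind (insert x B)).rcf (X.ind B) n).card : ℚ)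
      = ((X.cf n).card : ℚ) := by
  classical
  set m := X.verts.card with hmdef
  have hm1 : 1 ≤ m := Finset.card_pos.2 hm
  have hstep : ∀ x ∈ X.verts, ∑ j' ∈ Finset.range m,
      (1/(((m - 1).choose j' : ℕ) : ℚ)) *
        ∑ B ∈ Finset.powersetCard j' (X.verts.erase x),
          (((X.ind (insert x B)).rcf (X.ind B) n).card : ℚ)
      = ∑ s ∈ X.cf n, (if x ∈ s then (m : ℚ)/(n : ℚ) else 0) := by
    intro x hxv'
    have hxv : x ∈ X.verts := hxv'
    have hBsum : ∀ j' ∈ Finset.range m,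
        ∑ B ∈ Finset.powersetCard j' (X.verts.erase x),
          (((X.ind (insert x B)).rcf (X.ind B) n).card : ℚ)
        = ∑ s ∈ X.cf n, (if x ∈ s then
            (if n - 1 ≤ j' then (((m - n).choose (j' - (n-1)) : ℕ) : ℚ) else 0) else 0) := by
      intro j' hj'
      have e1 : ∀ B ∈ Finset.powersetCard j' (X.verts.erase x),
          (((X.ind (insert x B)).rcf (X.ind B) n).card : ℚ)
          = ∑ s ∈ X.cf n, (if x ∈ s ∧ s.erase x ⊆ B then (1:ℚ) else 0) := by
        intro B hB
        have hBsub : B ⊆ X.verts.erase x := (Finset.mem_powersetCard.1 hB).1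
        have hxB : x ∉ B := fun h => (Finset.mem_erase.1 (hBsub h)).1 rfl
        rw [rcf_pair_filter hxB n, Finset.card_filter]
        push_cast
        rfl
      rw [Finset.sum_congr rfl e1, Finset.sum_comm]
      apply Finset.sum_congr rfl
      intro s hs
      obtain ⟨hsf, hsc⟩ := mem_cf.1 hs
      by_cases hxs : x ∈ s
      · rw [if_pos hxs]
        have e2 : ∀ B ∈ Finset.powersetCard j' (X.verts.erase x),
            (if x ∈ s ∧ s.erase x ⊆ B then (1:ℚ) else 0)
            = (if s.erase x ⊆ B then (1:ℚ) else 0) := by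
          intro B _
          simp [hxs]
        rw [Finset.sum_congr rfl e2, ← Finset.sum_filter, Finset.sum_const, nsmul_eq_mul,
          mul_one]
        have hsub : s.erase x ⊆ X.verts.erase x :=
          Finset.erase_subset_erase x (face_subset_verts hsf)
        have hcount := card_filter_powersetCard (s.erase x) (X.verts.erase x) hsub j'
        rw [Finset.card_erase_of_mem hxs, Finset.card_erase_of_mem hxv, hsc] at hcount
        rw [hcount, show m - 1 - (n - 1) = m - n from by omega]
      · rw [if_neg hxs]
        apply Finset.sum_eq_zero
        intro B _
        simp [hxs]
    rw [Finset.sum_congr rfl (fun j' hj' => by rw [hBsum j' hj'] :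
      ∀ j' ∈ Finset.range m, (1/(((m - 1).choose j' : ℕ) : ℚ)) *
        ∑ B ∈ Finset.powersetCard j' (X.verts.erase x),
          (((X.ind (insert x B)).rcf (X.ind B) n).card : ℚ)
        = (1/(((m - 1).choose j' : ℕ) : ℚ)) * ∑ s ∈ X.cf n, (if x ∈ s then
            (if n - 1 ≤ j' then (((m - n).choose (j' - (n-1)) : ℕ) : ℚ) else 0) else 0))]
    have swap1 : ∑ j' ∈ Finset.range m, (1/(((m - 1).choose j' : ℕ) : ℚ)) *
        ∑ s ∈ X.cf n, (if x ∈ s then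
            (if n - 1 ≤ j' then (((m - n).choose (j' - (n-1)) : ℕ) : ℚ) else 0) else 0)
        = ∑ s ∈ X.cf n, ∑ j' ∈ Finset.range m, (1/(((m - 1).choose j' : ℕ) : ℚ)) *
            (if x ∈ s then
            (if n - 1 ≤ j' then (((m - n).choose (j' - (n-1)) : ℕ) : ℚ) else 0) else 0) := by
      rw [Finset.sum_congr rfl (fun j' _ => Finset.mul_sum _ _ _)]
      exact Finset.sum_comm
    rw [swap1]
    apply Finset.sum_congr rfl
    intro s hs
    obtain ⟨hsf, hsc⟩ := mem_cf.1 hs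
    by_cases hxs : x ∈ s
    · simp only [if_pos hxs]
      have hnm : n ≤ m := hsc ▸ Finset.card_le_card (face_subset_verts hsf)
      have := binom_avg (m-1) (n-1) (by omega)
      rw [show (m-1) - (n-1) = m - n from by omega] at this
      rw [show (Finset.range m) = Finset.range ((m-1)+1) from by rw [show (m-1)+1 = m from by omega]]
      rw [this, show ((m-1:ℕ):ℚ) + 1 = (m:ℚ) from by rw [Nat.cast_sub hm1]; push_cast; ring,
        show ((n-1:ℕ):ℚ) + 1 = (n:ℚ) from by rw [Nat.cast_sub hn]; push_cast; ring]
    · simp only [if_neg hxs, mul_zero]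
      rw [Finset.sum_const_zero]
  rw [Finset.sum_congr rfl hstep, Finset.sum_comm]
  have hinner : ∀ s ∈ X.cf n, ∑ x ∈ X.verts, (if x ∈ s then (m : ℚ)/(n : ℚ) else 0)
      = (m : ℚ) := by
    intro s hs
    obtain ⟨hsf, hsc⟩ := mem_cf.1 hs
    rw [← Finset.sum_filter]
    have hfe : X.verts.filter (fun x => x ∈ s) = s := by
      ext y
      simp only [Finset.mem_filter]
      exact ⟨fun h => h.2, fun h => ⟨face_subset_verts hsf h, h⟩⟩
    rw [hfe, Finset.sum_const, hsc, nsmul_eq_mul]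
    have hn0 : (n:ℚ) ≠ 0 := by positivity
    field_simp
  rw [Finset.sum_congr rfl hinner, Finset.sum_const, nsmul_eq_mul]
  have hm0 : (m:ℚ) ≠ 0 := by positivity
  field_simp

end Morse

namespace Morse
variable {V : Type} [LinearOrder V] (F : Type) [Field F]

lemma dc (Vs : Finset V) (k : ℕ) (h : V → Finset V → ℚ) :
    ∑ A ∈ Finset.powersetCard (k+1) Vs, ∑ x ∈ A, h x (A.erase x)
      = ∑ x ∈ Vs, ∑ B ∈ Finset.powersetCard k (Vs.erase x), h x B := by
  rw [Finset.sum_sigma', Finset.sum_sigma']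
  apply Finset.sum_nbij' (fun p => (⟨p.2, p.1.erase p.2⟩ : (_ : V) × Finset V))
    (fun p => (⟨insert p.1 p.2, p.1⟩ : (_ : Finset V) × V))
  · rintro ⟨A, x⟩ hp
    obtain ⟨hA, hx⟩ := Finset.mem_sigma.1 hp
    obtain ⟨hAV, hAc⟩ := Finset.mem_powersetCard.1 hA
    apply Finset.mem_sigma.2
    refine ⟨hAV hx, Finset.mem_powersetCard.2 ⟨Finset.erase_subset_erase x hAV, ?_⟩⟩
    rw [Finset.card_erase_of_mem hx, hAc]
    omega
  · rintro ⟨x, B⟩ hp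
    obtain ⟨hx, hB⟩ := Finset.mem_sigma.1 hp
    obtain ⟨hBV, hBc⟩ := Finset.mem_powersetCard.1 hB
    have hxB : x ∉ B := fun hc => (Finset.mem_erase.1 (hBV hc)).1 rfl
    apply Finset.mem_sigma.2
    constructor
    · apply Finset.mem_powersetCard.2
      constructor
      · apply Finset.insert_subset hx
        exact hBV.trans (Finset.erase_subset _ _)
      · rw [Finset.card_insert_of_notMem hxB, hBc]
    · exact Finset.mem_insert_self _ _
  · rintro ⟨A, x⟩ hp
    obtain ⟨-, hx⟩ := Finset.mem_sigma.1 hp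
    show (⟨insert x (A.erase x), x⟩ : (_ : Finset V) × V) = ⟨A, x⟩
    rw [Finset.insert_erase hx]
  · rintro ⟨x, B⟩ hp
    obtain ⟨-, hB⟩ := Finset.mem_sigma.1 hp
    obtain ⟨hBV, -⟩ := Finset.mem_powersetCard.1 hB
    have hxB : x ∉ B := fun hc => (Finset.mem_erase.1 (hBV hc)).1 rfl
    show (⟨x, (insert x B).erase x⟩ : (_ : V) × Finset V) = ⟨x, B⟩
    rw [Finset.erase_insert hxB]
  · rintro ⟨A, x⟩ _
    rfl

lemma dc2 (Vs : Finset V) (k : ℕ) (g : Finset V → ℚ) :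
    ∑ x ∈ Vs, ∑ B ∈ Finset.powersetCard k (Vs.erase x), g B
      = ((Vs.card - k : ℕ) : ℚ) * ∑ B ∈ Finset.powersetCard k Vs, g B := by
  classical
  have e : ∀ x ∈ Vs, Finset.powersetCard k (Vs.erase x)
      = (Finset.powersetCard k Vs).filter (fun B => x ∉ B) := by
    intro x _
    ext B
    simp only [Finset.mem_powersetCard, Finset.mem_filter, Finset.subset_erase]
    tauto
  rw [Finset.sum_congr rfl (fun x hx => by rw [e x hx, ← Finset.sum_filter] :
    ∀ x ∈ Vs, (∑ B ∈ Finset.powersetCard k (Vs.erase x), g B)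
      = ∑ B ∈ Finset.powersetCard k Vs, if x ∉ B then g B else 0)]
  rw [Finset.sum_comm]
  rw [Finset.mul_sum]
  apply Finset.sum_congr rfl
  intro B hB
  obtain ⟨hBV, hBc⟩ := Finset.mem_powersetCard.1 hB
  rw [← Finset.sum_filter]
  have : Vs.filter (fun x => x ∉ B) = Vs \ B := (Finset.sdiff_eq_filter Vs B).symm
  rw [this, Finset.sum_const, Finset.card_sdiff_of_subset hBV, hBc, nsmul_eq_mul]

/-- abstract telescoping inequality -/
lemma tele_abstract (Vs : Finset V) (φ : Finset V → ℚ) (ψ : V → Finset V → ℚ)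
    (hstep : ∀ A : Finset V, ∀ x ∈ A, φ (A.erase x) + ψ x (A.erase x) ≤ φ A)
    (hphi0 : φ ∅ = 0) :
    (1/((Vs.card : ℕ):ℚ)) * ∑ x ∈ Vs, ∑ t ∈ Finset.range Vs.card,
      (1/(((Vs.card - 1).choose t : ℕ):ℚ)) * ∑ B ∈ Finset.powersetCard t (Vs.erase x), ψ x B
      ≤ φ Vs := by
  classical
  rcases Nat.eq_zero_or_pos Vs.card with hm0 | hm1'
  · have hV : Vs = ∅ := Finset.card_eq_zero.1 hm0
    simp [hV, hphi0]
  · set m := Vs.card with hm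
    have hm1 : 1 ≤ m := hm1' 
    have key : ∀ k, k ≤ m →
        ∑ t ∈ Finset.range k, ((1/((m:ℕ):ℚ)) * ∑ x ∈ Vs,
          (1/(((m - 1).choose t : ℕ):ℚ)) * ∑ B ∈ Finset.powersetCard t (Vs.erase x), ψ x B)
        ≤ (1/((m.choose k : ℕ):ℚ)) * ∑ A ∈ Finset.powersetCard k Vs, φ A := by
      intro k
      induction k with
      | zero =>
        intro _
        rw [Finset.sum_range_zero, Finset.powersetCard_zero, Finset.sum_singleton, hphi0]
        simp
      | succ k ih =>
        intro hk1
        have hk : k ≤ m := by omega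
        have ihk := ih hk
        -- the summed step inequality
        have main : ((m - k : ℕ):ℚ) * (∑ A ∈ Finset.powersetCard k Vs, φ A)
            + (∑ x ∈ Vs, ∑ B ∈ Finset.powersetCard k (Vs.erase x), ψ x B)
            ≤ ((k+1 : ℕ):ℚ) * ∑ A ∈ Finset.powersetCard (k+1) Vs, φ A := by
          have perA : ∀ A ∈ Finset.powersetCard (k+1) Vs,
              (∑ x ∈ A, (φ (A.erase x) + ψ x (A.erase x))) ≤ ((k+1:ℕ):ℚ) * φ A := by
            intro A hA
            obtain ⟨-, hAc⟩ := Finset.mem_powersetCard.1 hA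
            calc ∑ x ∈ A, (φ (A.erase x) + ψ x (A.erase x))
                ≤ ∑ _x ∈ A, φ A := Finset.sum_le_sum (fun x hx => hstep A x hx)
              _ = ((k+1:ℕ):ℚ) * φ A := by rw [Finset.sum_const, hAc, nsmul_eq_mul]
          calc ((m - k : ℕ):ℚ) * (∑ A ∈ Finset.powersetCard k Vs, φ A)
              + (∑ x ∈ Vs, ∑ B ∈ Finset.powersetCard k (Vs.erase x), ψ x B)
              = (∑ x ∈ Vs, ∑ B ∈ Finset.powersetCard k (Vs.erase x), φ B)
                + (∑ x ∈ Vs, ∑ B ∈ Finset.powersetCard k (Vs.erase x), ψ x B) := by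
                rw [dc2 Vs k φ]
            _ = ∑ A ∈ Finset.powersetCard (k+1) Vs, ∑ x ∈ A,
                  (φ (A.erase x) + ψ x (A.erase x)) := by
                rw [← dc Vs k (fun x B => φ B), ← dc Vs k ψ, ← Finset.sum_add_distrib]
                apply Finset.sum_congr rfl
                intro A _
                rw [← Finset.sum_add_distrib]
            _ ≤ ∑ A ∈ Finset.powersetCard (k+1) Vs, ((k+1:ℕ):ℚ) * φ A :=
                Finset.sum_le_sum perA
            _ = ((k+1:ℕ):ℚ) * ∑ A ∈ Finset.powersetCard (k+1) Vs, φ A := by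
                rw [Finset.mul_sum]
        -- now divide
        have hc0 : (0:ℚ) < ((m.choose k : ℕ):ℚ) := by
          exact_mod_cast Nat.choose_pos hk
        have hc1 : (0:ℚ) < ((m.choose (k+1) : ℕ):ℚ) := by
          exact_mod_cast Nat.choose_pos hk1
        have hc' : (0:ℚ) < (((m-1).choose k : ℕ):ℚ) := by
          exact_mod_cast Nat.choose_pos (by omega : k ≤ m - 1)
        have hmq : (0:ℚ) < ((m:ℕ):ℚ) := by exact_mod_cast hm1
        have hid1 : ((m.choose (k+1) : ℕ):ℚ) * ((k+1:ℕ):ℚ)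
            = ((m.choose k : ℕ):ℚ) * ((m - k : ℕ):ℚ) := by
          exact_mod_cast congrArg (Nat.cast : ℕ → ℚ) (Nat.choose_succ_right_eq m k)
        have hid2 : ((m:ℕ):ℚ) * (((m-1).choose k : ℕ):ℚ)
            = ((m.choose (k+1) : ℕ):ℚ) * ((k+1:ℕ):ℚ) := by
          have := Nat.add_one_mul_choose_eq (m-1) k
          rw [show (m-1)+1 = m from by omega] at this
          exact_mod_cast congrArg (Nat.cast : ℕ → ℚ) this
        rw [Finset.sum_range_succ]
        set S := ∑ A ∈ Finset.powersetCard k Vs, φ A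
        set S' := ∑ A ∈ Finset.powersetCard (k+1) Vs, φ A
        set T := ∑ x ∈ Vs, ∑ B ∈ Finset.powersetCard k (Vs.erase x), ψ x B
        have hpsi : (1/((m:ℕ):ℚ)) * ∑ x ∈ Vs,
            (1/(((m - 1).choose k : ℕ):ℚ)) * ∑ B ∈ Finset.powersetCard k (Vs.erase x), ψ x B
            = (1/(((m:ℕ):ℚ) * (((m-1).choose k : ℕ):ℚ))) * T := by
          rw [← Finset.mul_sum]
          field_simp
          rfl
        rw [hpsi]
        calc (∑ t ∈ Finset.range k, ((1/((m:ℕ):ℚ)) * ∑ x ∈ Vs,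
              (1/(((m - 1).choose t : ℕ):ℚ))
                * ∑ B ∈ Finset.powersetCard t (Vs.erase x), ψ x B))
              + (1/(((m:ℕ):ℚ) * (((m-1).choose k : ℕ):ℚ))) * T
            ≤ (1/((m.choose k : ℕ):ℚ)) * S
              + (1/(((m:ℕ):ℚ) * (((m-1).choose k : ℕ):ℚ))) * T := by
              exact add_le_add ihk le_rfl
          _ ≤ (1/((m.choose (k+1) : ℕ):ℚ)) * S' := by
              have hD : (0:ℚ) < ((m.choose (k+1):ℕ):ℚ) * ((k+1:ℕ):ℚ) := by positivity
              have hmk : ((m - k : ℕ):ℚ) ≠ 0 := by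
                exact_mod_cast (by omega : (m - k : ℕ) ≠ 0)
              have hk1q : ((k+1 : ℕ):ℚ) ≠ 0 := by positivity
              have ea : (1/((m.choose k : ℕ):ℚ)) * S
                  = (((m - k : ℕ):ℚ) * S) / (((m.choose (k+1):ℕ):ℚ) * ((k+1:ℕ):ℚ)) := by
                rw [one_div_mul_eq_div, hid1, mul_comm ((m.choose k : ℕ):ℚ) ((m - k : ℕ):ℚ),
                  mul_div_mul_left _ _ hmk]
              have eb : (1/(((m:ℕ):ℚ) * (((m-1).choose k : ℕ):ℚ))) * T
                  = T / (((m.choose (k+1):ℕ):ℚ) * ((k+1:ℕ):ℚ)) := by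
                rw [one_div_mul_eq_div, hid2]
              have ec : (1/((m.choose (k+1) : ℕ):ℚ)) * S'
                  = (((k+1:ℕ):ℚ) * S') / (((m.choose (k+1):ℕ):ℚ) * ((k+1:ℕ):ℚ)) := by
                rw [one_div_mul_eq_div, mul_comm ((m.choose (k+1) : ℕ):ℚ) ((k+1:ℕ):ℚ),
                  mul_div_mul_left _ _ hk1q]
              rw [ea, eb, ec, ← add_div]
              gcongr
    -- conclude with k = m
    have final := key m (le_refl m)
    rw [Finset.powersetCard_self, Finset.sum_singleton, Nat.choose_self] at final
    calc (1/((m:ℕ):ℚ)) * ∑ x ∈ Vs, ∑ t ∈ Finset.range m,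
          (1/(((m - 1).choose t : ℕ):ℚ)) * ∑ B ∈ Finset.powersetCard t (Vs.erase x), ψ x B
        = ∑ t ∈ Finset.range m, ((1/((m:ℕ):ℚ)) * ∑ x ∈ Vs,
          (1/(((m - 1).choose t : ℕ):ℚ))
            * ∑ B ∈ Finset.powersetCard t (Vs.erase x), ψ x B) := by
          rw [Finset.sum_comm, Finset.mul_sum]
      _ ≤ (1/((1:ℕ):ℚ)) * φ Vs := final
      _ = φ Vs := by norm_num

end Morse

namespace Morse
variable {V : Type} [LinearOrder V] (F : Type) [Field F]

lemma step_ineq (X : SC V) (j : ℕ) (A : Finset V) (x : V) (hx : x ∈ A) :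
    rkD F (X.ind (A.erase x)) (j+1) + rkRel F (X.ind A) (X.ind (A.erase x)) (j+1)
      ≤ rkD F (X.ind A) (j+1) := by
  classical
  rw [rkD_succ, rkD_succ, rkRel_succ]
  have h1 : ∀ n, ((X.ind A).cf n).filter (fun s => s ∈ (X.ind (A.erase x)).faces)
      = (X.ind (A.erase x)).cf n := by
    intro n
    ext s
    simp only [Finset.mem_filter, mem_cf, mem_ind_faces]
    constructor
    · rintro ⟨⟨⟨hf, -⟩, hc⟩, -, hsub⟩
      exact ⟨⟨hf, hsub⟩, hc⟩
    · rintro ⟨⟨hf, hsub⟩, hc⟩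
      exact ⟨⟨⟨hf, hsub.trans (Finset.erase_subset _ _)⟩, hc⟩, hf, hsub⟩
  have h2 : ∀ n, ((X.ind A).cf n).filter (fun s => ¬ s ∈ (X.ind (A.erase x)).faces)
      = (X.ind A).rcf (X.ind (A.erase x)) n := fun n => rfl
  have hz : ∀ s ∈ (X.ind A).cf (j+2), s ∈ (X.ind (A.erase x)).faces →
      ∀ t ∈ (X.ind A).cf (j+1), ¬ t ∈ (X.ind (A.erase x)).faces → SC.coeff F s t = 0 := by
    intro s hs hps t ht hpt
    obtain ⟨hsf, hssub⟩ := mem_ind_faces.1 hps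
    obtain ⟨htf', -⟩ := mem_cf.1 ht
    obtain ⟨htf, htA⟩ := mem_ind_faces.1 htf' 
    have hxt : x ∈ t := by
      by_contra hxt
      exact hpt (mem_ind_faces.2 ⟨htf, fun u hu =>
        Finset.mem_erase.2 ⟨fun he => hxt (he ▸ hu), htA hu⟩⟩)
    have hxs : x ∉ s := fun hc => (Finset.mem_erase.1 (hssub hc)).1 rfl
    have hnsub : ¬ t ⊆ s := fun hsub => hxs (hsub hxt)
    rw [SC.coeff, if_neg hnsub]
  have := rank_block F ((X.ind A).cf (j+2)) ((X.ind A).cf (j+1))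
    (fun s => s ∈ (X.ind (A.erase x)).faces) hz
  rw [h1 (j+2), h1 (j+1), h2 (j+2), h2 (j+1)] at this
  exact this

lemma rkD_ind_empty (X : SC V) (j : ℕ) : rkD F (X.ind (∅ : Finset V)) (j+1) = 0 := by
  rw [rkD_succ]
  apply rk_empty
  rw [Finset.eq_empty_iff_forall_notMem]
  intro s hs
  obtain ⟨hf', hc⟩ := mem_cf.1 hs
  obtain ⟨-, hsub⟩ := mem_ind_faces.1 hf'
  have hse : s = ∅ := Finset.subset_empty.1 hsub
  subst hse
  simp at hc

lemma tele (X : SC V) (j : ℕ) :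
    (1/((X.verts.card : ℕ):ℚ)) * ∑ x ∈ X.verts, ∑ t ∈ Finset.range X.verts.card,
      (1/(((X.verts.card - 1).choose t : ℕ):ℚ)) *
        ∑ B ∈ Finset.powersetCard t (X.verts.erase x),
          (rkRel F (X.ind (insert x B)) (X.ind B) (j+1) : ℚ)
      ≤ (rkD F X (j+1) : ℚ) := by
  have h := tele_abstract X.verts (fun A => (rkD F (X.ind A) (j+1) : ℚ))
    (fun x B => (rkRel F (X.ind (insert x B)) (X.ind B) (j+1) : ℚ))
    (by
      intro A x hx
      have h1 := step_ineq F X j A x hx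
      have h2 : (rkRel F (X.ind (insert x (A.erase x))) (X.ind (A.erase x)) (j+1) : ℚ)
          = (rkRel F (X.ind A) (X.ind (A.erase x)) (j+1) : ℚ) := by
        rw [Finset.insert_erase hx]
      show (rkD F (X.ind (A.erase x)) (j+1) : ℚ)
          + (rkRel F (X.ind (insert x (A.erase x))) (X.ind (A.erase x)) (j+1) : ℚ)
          ≤ (rkD F (X.ind A) (j+1) : ℚ)
      rw [h2]
      exact_mod_cast h1)
    (by
      show (rkD F (X.ind (∅:Finset V)) (j+1) : ℚ) = 0
      rw [rkD_ind_empty]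
      exact Nat.cast_zero)
  rw [ind_verts_eq] at h
  exact h

lemma rkD_top (X : SC V) (d : ℕ) (hd : X.dimIs d) : rkD F X (d+1) = 0 := by
  rw [rkD_succ]
  apply rk_empty
  rw [Finset.eq_empty_iff_forall_notMem]
  intro s hs
  obtain ⟨hf, hc⟩ := mem_cf.1 hs
  have := hd.2 s hf
  omega

lemma rkRel_top (X : SC V) (d : ℕ) (hd : X.dimIs d) (x : V) (B : Finset V) :
    rkRel F (X.ind (insert x B)) (X.ind B) (d+1) = 0 := by
  rw [rkRel_succ]
  apply rk_empty
  rw [Finset.eq_empty_iff_forall_notMem]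
  intro s hs
  rw [SC.rcf, Finset.mem_filter] at hs
  obtain ⟨hcf, -⟩ := hs
  obtain ⟨hf', hc⟩ := mem_cf.1 hcf
  obtain ⟨hf, -⟩ := mem_ind_faces.1 hf'
  have := hd.2 s hf
  omega

end Morse

namespace Morse
variable {V : Type} [LinearOrder V] (F : Type) [Field F]

/-- the weighted sum over pairs (x, B) -/
noncomputable def wsum (X : SC V) (g : V → Finset V → ℚ) : ℚ :=
  (1/((X.verts.card : ℕ):ℚ)) * ∑ x ∈ X.verts, ∑ t ∈ Finset.range X.verts.card,
    (1/(((X.verts.card - 1).choose t : ℕ):ℚ)) *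
      ∑ B ∈ Finset.powersetCard t (X.verts.erase x), g x B

lemma wsum_congr {X : SC V} {g g' : V → Finset V → ℚ}
    (h : ∀ x ∈ X.verts, ∀ B ⊆ X.verts.erase x, g x B = g' x B) :
    wsum X g = wsum X g' := by
  unfold wsum
  congr 1
  apply Finset.sum_congr rfl
  intro x hx
  apply Finset.sum_congr rfl
  intro t _
  congr 1
  apply Finset.sum_congr rfl
  intro B hB
  exact h x hx B (Finset.mem_powersetCard.1 hB).1

lemma wsum_sub (X : SC V) (g g' : V → Finset V → ℚ) :
    wsum X (fun x B => g x B - g' x B) = wsum X g - wsum X g' := by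
  unfold wsum
  rw [← mul_sub, ← Finset.sum_sub_distrib]
  congr 1
  apply Finset.sum_congr rfl
  intro x _
  rw [← Finset.sum_sub_distrib]
  apply Finset.sum_congr rfl
  intro t _
  rw [← mul_sub, ← Finset.sum_sub_distrib]

lemma wsum_sum (X : SC V) (r : Finset ℕ) (f : ℕ → V → Finset V → ℚ) :
    wsum X (fun x B => ∑ i ∈ r, f i x B) = ∑ i ∈ r, wsum X (f i) := by
  unfold wsum
  calc (1/((X.verts.card : ℕ):ℚ)) * ∑ x ∈ X.verts, ∑ t ∈ Finset.range X.verts.card,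
      (1/(((X.verts.card - 1).choose t : ℕ):ℚ)) *
        ∑ B ∈ Finset.powersetCard t (X.verts.erase x), ∑ i ∈ r, f i x B
      = (1/((X.verts.card : ℕ):ℚ)) * ∑ x ∈ X.verts, ∑ t ∈ Finset.range X.verts.card,
          ∑ i ∈ r, (1/(((X.verts.card - 1).choose t : ℕ):ℚ)) *
            ∑ B ∈ Finset.powersetCard t (X.verts.erase x), f i x B := by
        congr 1
        apply Finset.sum_congr rfl
        intro x _
        apply Finset.sum_congr rfl
        intro t _
        rw [Finset.sum_comm, Finset.mul_sum]
    _ = (1/((X.verts.card : ℕ):ℚ)) * ∑ x ∈ X.verts, ∑ i ∈ r,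
          ∑ t ∈ Finset.range X.verts.card, (1/(((X.verts.card - 1).choose t : ℕ):ℚ)) *
            ∑ B ∈ Finset.powersetCard t (X.verts.erase x), f i x B := by
        congr 1
        apply Finset.sum_congr rfl
        intro x _
        exact Finset.sum_comm
    _ = (1/((X.verts.card : ℕ):ℚ)) * ∑ i ∈ r, ∑ x ∈ X.verts,
          ∑ t ∈ Finset.range X.verts.card, (1/(((X.verts.card - 1).choose t : ℕ):ℚ)) *
            ∑ B ∈ Finset.powersetCard t (X.verts.erase x), f i x B := by
        congr 1
        exact Finset.sum_comm
    _ = ∑ i ∈ r, (1/((X.verts.card : ℕ):ℚ)) * ∑ x ∈ X.verts,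
          ∑ t ∈ Finset.range X.verts.card, (1/(((X.verts.card - 1).choose t : ℕ):ℚ)) *
            ∑ B ∈ Finset.powersetCard t (X.verts.erase x), f i x B :=
        Finset.mul_sum _ _ _

lemma wsum_smul (X : SC V) (c : ℚ) (g : V → Finset V → ℚ) :
    wsum X (fun x B => c * g x B) = c * wsum X g := by
  unfold wsum
  rw [mul_left_comm]
  congr 1
  rw [Finset.mul_sum]
  apply Finset.sum_congr rfl
  intro x _
  rw [Finset.mul_sum]
  apply Finset.sum_congr rfl
  intro t _
  rw [← Finset.mul_sum, mul_left_comm]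

lemma wsum_const (X : SC V) (hm : X.verts.Nonempty) (c : ℚ) :
    wsum X (fun _ _ => c) = (X.verts.card : ℚ) * c := by
  unfold wsum
  have hm1 : 1 ≤ X.verts.card := Finset.card_pos.2 hm
  have e : ∀ x ∈ X.verts, ∑ t ∈ Finset.range X.verts.card,
      (1/(((X.verts.card - 1).choose t : ℕ):ℚ)) *
        ∑ _B ∈ Finset.powersetCard t (X.verts.erase x), c
      = (X.verts.card : ℚ) * c := by
    intro x hx
    have e2 : ∀ t ∈ Finset.range X.verts.card,
        (1/(((X.verts.card - 1).choose t : ℕ):ℚ)) *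
          ∑ _B ∈ Finset.powersetCard t (X.verts.erase x), c = c := by
      intro t ht
      rw [Finset.sum_const, Finset.card_powersetCard, Finset.card_erase_of_mem hx,
        nsmul_eq_mul]
      have hpos : (0:ℚ) < (((X.verts.card - 1).choose t : ℕ):ℚ) := by
        exact_mod_cast Nat.choose_pos (by
          rw [Finset.mem_range] at ht
          omega)
      field_simp
    rw [Finset.sum_congr rfl e2, Finset.sum_const, Finset.card_range, nsmul_eq_mul]
  rw [Finset.sum_congr rfl e, Finset.sum_const, nsmul_eq_mul]
  have hm0 : ((X.verts.card : ℕ):ℚ) ≠ 0 := by positivity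
  field_simp

lemma wsum_empty_ind (X : SC V) (hm : X.verts.Nonempty) (c : ℚ) :
    wsum X (fun _ B => if B = ∅ then c else 0) = c := by
  classical
  unfold wsum
  have hm1 : 1 ≤ X.verts.card := Finset.card_pos.2 hm
  have e : ∀ x ∈ X.verts, ∑ t ∈ Finset.range X.verts.card,
      (1/(((X.verts.card - 1).choose t : ℕ):ℚ)) *
        ∑ B ∈ Finset.powersetCard t (X.verts.erase x), (if B = ∅ then c else 0)
      = c := by
    intro x hx
    have e2 : ∀ t ∈ Finset.range X.verts.card,
        (1/(((X.verts.card - 1).choose t : ℕ):ℚ)) *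
          ∑ B ∈ Finset.powersetCard t (X.verts.erase x), (if B = ∅ then c else 0)
        = if t = 0 then c else 0 := by
      intro t ht
      have hsum : ∑ B ∈ Finset.powersetCard t (X.verts.erase x), (if B = ∅ then c else 0)
          = if (∅ : Finset V) ∈ Finset.powersetCard t (X.verts.erase x) then c else 0 :=
        Finset.sum_ite_eq' _ _ _
      rw [hsum]
      by_cases h0 : t = 0
      · subst h0
        rw [if_pos (Finset.mem_powersetCard.2 ⟨Finset.empty_subset _, Finset.card_empty⟩),
          if_pos rfl]
        norm_num
      · rw [if_neg, if_neg h0]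
        · ring
        · intro hc
          obtain ⟨-, hcard⟩ := Finset.mem_powersetCard.1 hc
          rw [Finset.card_empty] at hcard
          exact h0 hcard.symm
    rw [Finset.sum_congr rfl e2, Finset.sum_ite_eq' (Finset.range X.verts.card) 0
      (fun _ => c)]
    rw [if_pos (Finset.mem_range.2 (by omega))]
  rw [Finset.sum_congr rfl e, Finset.sum_const, nsmul_eq_mul]
  have hm0 : ((X.verts.card : ℕ):ℚ) ≠ 0 := by positivity
  field_simp

lemma wsum_card (X : SC V) {n : ℕ} (hn : 1 ≤ n) (hm : X.verts.Nonempty) :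
    wsum X (fun x B => (((X.ind (insert x B)).rcf (X.ind B) n).card : ℚ))
      = ((X.cf n).card : ℚ) := weightcard X hn hm

lemma wsum_tele (X : SC V) (j : ℕ) :
    wsum X (fun x B => (rkRel F (X.ind (insert x B)) (X.ind B) (j+1) : ℚ))
      ≤ (rkD F X (j+1) : ℚ) := tele F X j

end Morse

namespace Morse
variable {V : Type} [LinearOrder V] (F : Type) [Field F]

lemma master (X : SC V) (h2 : X.Neighbourly 2) (hm : X.verts.Nonempty) (j : ℕ) :
    ∑ i ∈ Finset.range (j+1), (-1:ℚ)^(j-i) * SC.mu F X i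
      = (∑ i ∈ Finset.range (j+1), (-1:ℚ)^(j-i) * ((X.cf (i+1)).card : ℚ))
        - wsum X (fun x B => (rkRel F (X.ind (insert x B)) (X.ind B) (j+1) : ℚ)) := by
  have hm1 : 1 ≤ X.verts.card := Finset.card_pos.2 hm
  cases j with
  | zero =>
    rw [Finset.sum_range_one, Finset.sum_range_one]
    have hmu0 : SC.mu F X 0 = 1 := by rw [SC.mu]; simp
    have hcard1 : ((X.cf 1).card : ℚ) = (X.verts.card : ℚ) := by
      rw [← wsum_card X (le_refl 1) hm]
      rw [wsum_congr (g' := fun _ _ => (1:ℚ)) (by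
        intro x hx B hB
        have hxB : x ∉ B := fun h => (Finset.mem_erase.1 (hB h)).1 rfl
        rw [card_rcf_pair_one hxB hx]
        norm_num)]
      rw [wsum_const X hm 1, mul_one]
    have hrk : wsum X (fun x B => (rkRel F (X.ind (insert x B)) (X.ind B) 1 : ℚ))
        = (X.verts.card : ℚ) - 1 := by
      rw [wsum_congr (g' := fun _ B => 1 - (if B = ∅ then (1:ℚ) else 0)) (by
        intro x hx B hB
        rw [rkRel_pair_one F h2 hx hB]
        by_cases hB0 : B = ∅ <;> simp [hB0])]
      rw [wsum_sub X (fun _ _ => (1:ℚ)) (fun _ B => if B = ∅ then (1:ℚ) else 0),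
        wsum_const X hm 1, wsum_empty_ind X hm 1, mul_one]
    rw [hmu0, hcard1, hrk]
    ring
  | succ n =>
    have hc0 : (-1:ℚ)^(n+1) + (-1:ℚ)^n = 0 := by rw [pow_succ]; ring
    have stepA : ∑ i ∈ Finset.range (n+2), (-1:ℚ)^(n+1-i) * SC.mu F X i
        = (-1:ℚ)^(n+1) + (-1:ℚ)^n
          + ∑ i ∈ Finset.range (n+1), (-1:ℚ)^(n-i)
              * ((1/(X.verts.card : ℚ)) * ∑ x ∈ X.verts, SC.sigma F (X.lk x) i) := by
      rw [Finset.sum_range_succ' (fun i => (-1:ℚ)^(n+1-i) * SC.mu F X i) (n+1)]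
      have hf0 : (-1:ℚ)^(n+1-0) * SC.mu F X 0 = (-1:ℚ)^(n+1) := by
        rw [SC.mu]; simp
      have hfi : ∀ i ∈ Finset.range (n+1), (-1:ℚ)^(n+1-(i+1)) * SC.mu F X (i+1)
          = (if i = 0 then (-1:ℚ)^(n-i) else 0)
            + (-1:ℚ)^(n-i) * ((1/(X.verts.card : ℚ)) * ∑ x ∈ X.verts, SC.sigma F (X.lk x) i) := by
        intro i hi
        rw [show n+1-(i+1) = n-i from by omega]
        rw [SC.mu, if_neg (Nat.succ_ne_zero i)]
        rw [show i + 1 - 1 = i from rfl]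
        by_cases h0 : i = 0
        · subst h0
          rw [if_pos rfl, if_pos rfl]
          ring
        · rw [if_neg (by omega : ¬ i + 1 = 1), if_neg h0]
          ring
      rw [Finset.sum_congr rfl hfi, Finset.sum_add_distrib,
        Finset.sum_ite_eq' (Finset.range (n+1)) 0 (fun i => (-1:ℚ)^(n-i)),
        if_pos (Finset.mem_range.2 (by omega))]
      rw [hf0]
      simp only [Nat.sub_zero]
      ring
    have stepB : ∀ x ∈ X.verts,
        ∑ i ∈ Finset.range (n+1), (-1:ℚ)^(n-i) * SC.sigma F (X.lk x) i
        = ∑ t ∈ Finset.range X.verts.card, (1/(((X.verts.card - 1).choose t : ℕ):ℚ)) *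
            ∑ B ∈ Finset.powersetCard t (X.verts.erase x),
              ∑ i ∈ Finset.range (n+1), (-1:ℚ)^(n-i)
                * (SC.rbetti F ((X.lk x).ind B) i : ℚ) := by
      intro x hx
      have hσ : ∀ i, SC.sigma F (X.lk x) i = ∑ t ∈ Finset.range X.verts.card,
          (1/(((X.verts.card - 1).choose t : ℕ):ℚ)) *
            ∑ B ∈ Finset.powersetCard t (X.verts.erase x),
              (SC.rbetti F ((X.lk x).ind B) i : ℚ) := by
        intro i
        rw [SC.sigma, lk_verts h2 hx, Finset.card_erase_of_mem hx]
        rw [show X.verts.card - 1 + 1 = X.verts.card from by omega]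
      rw [Finset.sum_congr rfl (fun i (_ : i ∈ Finset.range (n+1)) => by
        rw [hσ i, Finset.mul_sum] :
        ∀ i ∈ Finset.range (n+1), (-1:ℚ)^(n-i) * SC.sigma F (X.lk x) i
          = ∑ t ∈ Finset.range X.verts.card, (-1:ℚ)^(n-i)
              * ((1/(((X.verts.card - 1).choose t : ℕ):ℚ)) *
                ∑ B ∈ Finset.powersetCard t (X.verts.erase x),
                  (SC.rbetti F ((X.lk x).ind B) i : ℚ)))]
      rw [Finset.sum_comm]
      apply Finset.sum_congr rfl
      intro t _
      calc ∑ i ∈ Finset.range (n+1), (-1:ℚ)^(n-i)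
            * ((1/(((X.verts.card - 1).choose t : ℕ):ℚ)) *
              ∑ B ∈ Finset.powersetCard t (X.verts.erase x),
                (SC.rbetti F ((X.lk x).ind B) i : ℚ))
          = ∑ i ∈ Finset.range (n+1), (1/(((X.verts.card - 1).choose t : ℕ):ℚ)) *
              ∑ B ∈ Finset.powersetCard t (X.verts.erase x),
                (-1:ℚ)^(n-i) * (SC.rbetti F ((X.lk x).ind B) i : ℚ) := by
            apply Finset.sum_congr rfl
            intro i _
            rw [Finset.mul_sum, Finset.mul_sum, Finset.mul_sum]
            apply Finset.sum_congr rfl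
            intro B _
            ring
        _ = (1/(((X.verts.card - 1).choose t : ℕ):ℚ)) *
              ∑ i ∈ Finset.range (n+1), ∑ B ∈ Finset.powersetCard t (X.verts.erase x),
                (-1:ℚ)^(n-i) * (SC.rbetti F ((X.lk x).ind B) i : ℚ) := by
            rw [Finset.mul_sum]
        _ = _ := by rw [Finset.sum_comm]
    have stepB' : ∑ i ∈ Finset.range (n+1), (-1:ℚ)^(n-i)
          * ((1/(X.verts.card : ℚ)) * ∑ x ∈ X.verts, SC.sigma F (X.lk x) i)
        = (1/(X.verts.card : ℚ)) * ∑ x ∈ X.verts,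
            ∑ i ∈ Finset.range (n+1), (-1:ℚ)^(n-i) * SC.sigma F (X.lk x) i := by
      calc ∑ i ∈ Finset.range (n+1), (-1:ℚ)^(n-i)
            * ((1/(X.verts.card : ℚ)) * ∑ x ∈ X.verts, SC.sigma F (X.lk x) i)
          = ∑ i ∈ Finset.range (n+1), (1/(X.verts.card : ℚ))
              * ∑ x ∈ X.verts, (-1:ℚ)^(n-i) * SC.sigma F (X.lk x) i := by
            apply Finset.sum_congr rfl
            intro i _
            rw [Finset.mul_sum, Finset.mul_sum, Finset.mul_sum]
            apply Finset.sum_congr rfl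
            intro xx _
            ring
        _ = (1/(X.verts.card : ℚ)) * ∑ i ∈ Finset.range (n+1),
              ∑ x ∈ X.verts, (-1:ℚ)^(n-i) * SC.sigma F (X.lk x) i := by
            rw [Finset.mul_sum]
        _ = _ := by rw [Finset.sum_comm]
    have stepC : (1/(X.verts.card : ℚ)) * ∑ x ∈ X.verts,
          ∑ i ∈ Finset.range (n+1), (-1:ℚ)^(n-i) * SC.sigma F (X.lk x) i
        = wsum X (fun x B =>
            (∑ i ∈ Finset.range (n+2), (-1:ℚ)^(n+1-i)
              * (((X.ind (insert x B)).rcf (X.ind B) (i+1)).card : ℚ))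
            - (rkRel F (X.ind (insert x B)) (X.ind B) (n+2) : ℚ)
            - ((-1:ℚ)^(n+1) + (-1:ℚ)^n)) := by
      unfold wsum
      congr 1
      apply Finset.sum_congr rfl
      intro x hx
      rw [stepB x hx]
      apply Finset.sum_congr rfl
      intro t _
      congr 1
      apply Finset.sum_congr rfl
      intro B hB
      exact linkT F h2 hx (Finset.mem_powersetCard.1 hB).1 n
    have hWval : wsum X (fun x B => ∑ i ∈ Finset.range (n+2), (-1:ℚ)^(n+1-i)
          * (((X.ind (insert x B)).rcf (X.ind B) (i+1)).card : ℚ))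
        = ∑ i ∈ Finset.range (n+2), (-1:ℚ)^(n+1-i) * ((X.cf (i+1)).card : ℚ) := by
      rw [wsum_sum X (Finset.range (n+2)) (fun i x B => (-1:ℚ)^(n+1-i)
        * (((X.ind (insert x B)).rcf (X.ind B) (i+1)).card : ℚ))]
      apply Finset.sum_congr rfl
      intro i _
      rw [wsum_smul X ((-1:ℚ)^(n+1-i))
        (fun x B => (((X.ind (insert x B)).rcf (X.ind B) (i+1)).card : ℚ))]
      rw [wsum_card X (by omega : 1 ≤ i+1) hm]
    rw [stepA, stepB', stepC]
    rw [wsum_sub X _ (fun _ _ => (-1:ℚ)^(n+1) + (-1:ℚ)^n),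
      wsum_sub X _ (fun x B => (rkRel F (X.ind (insert x B)) (X.ind B) (n+2) : ℚ)),
      wsum_const X hm, hWval, hc0, mul_zero]
    ring
end Morse

namespace Morse
variable {V : Type} [LinearOrder V] (F : Type) [Field F]

lemma addsum (g : ℕ → ℚ) (n : ℕ) :
    ∑ i ∈ Finset.range (n+2), (-1:ℚ)^(n+1-i) * g i
      + ∑ i ∈ Finset.range (n+1), (-1:ℚ)^(n-i) * g i = g (n+1) := by
  rw [Finset.sum_range_succ]
  have : ∑ i ∈ Finset.range (n+1), (-1:ℚ)^(n+1-i) * g i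
      + ∑ i ∈ Finset.range (n+1), (-1:ℚ)^(n-i) * g i = 0 := by
    rw [← Finset.sum_add_distrib]
    apply Finset.sum_eq_zero
    intro i hi
    rw [Finset.mem_range] at hi
    rw [show n+1-i = (n-i)+1 from by omega, pow_succ]
    ring
  have h2 : (-1:ℚ)^(n+1-(n+1)) * g (n+1) = g (n+1) := by simp
  linarith [this, h2]

lemma strong_ineq (X : SC V) (h2 : X.Neighbourly 2) (hm : X.verts.Nonempty) (j : ℕ) :
    ∑ i ∈ Finset.range (j+1), (-1:ℚ)^(j-i) * (SC.betti F X i : ℚ)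
      ≤ ∑ i ∈ Finset.range (j+1), (-1:ℚ)^(j-i) * SC.mu F X i := by
  rw [betti_altsum, master F X h2 hm j]
  have := wsum_tele F X j
  have h2' : (rkD F X (j+1) : ℚ) ≥ wsum X
    (fun x B => (rkRel F (X.ind (insert x B)) (X.ind B) (j+1) : ℚ)) := this
  linarith

lemma top_eq (X : SC V) (h2 : X.Neighbourly 2) (hm : X.verts.Nonempty) (d : ℕ)
    (hd : X.dimIs d) :
    ∑ i ∈ Finset.range (d+1), (-1:ℚ)^(d-i) * SC.mu F X i
      = ∑ i ∈ Finset.range (d+1), (-1:ℚ)^(d-i) * (SC.betti F X i : ℚ) := by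
  rw [betti_altsum, master F X h2 hm d]
  rw [rkD_top F X d hd]
  have hw : wsum X (fun x B => (rkRel F (X.ind (insert x B)) (X.ind B) (d+1) : ℚ)) = 0 := by
    rw [wsum_congr (g' := fun _ _ => (0:ℚ)) (by
      intro x hx B hB
      rw [rkRel_top F X d hd x B]
      norm_num)]
    rw [wsum_const X hm 0, mul_zero]
  rw [hw]
  norm_num

end Morse

/-- Theorem 2.6 (a), (b): for a `2`-neighbourly `d`-dimensional simplicial complex, the
strong Morse inequalities `∑_{i=0}^{j} (-1)^{j-i} μ_i ≥ ∑_{i=0}^{j} (-1)^{j-i} β_i`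
(for `0 ≤ j ≤ d`, with equality for `j = d`) and the weak Morse inequalities
`μ_j ≥ β_j` hold. -/
theorem morse_inequalities {V : Type} [LinearOrder V] (F : Type) [Field F]
    (d : ℕ) (X : SC V) (hd : X.dimIs d) (h2 : X.Neighbourly 2) :
    (∀ j ≤ d, ∑ i ∈ Finset.range (j + 1), (-1 : ℚ) ^ (j - i) * (SC.betti F X i : ℚ) ≤
      ∑ i ∈ Finset.range (j + 1), (-1 : ℚ) ^ (j - i) * SC.mu F X i) ∧
    (∑ i ∈ Finset.range (d + 1), (-1 : ℚ) ^ (d - i) * SC.mu F X i =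
      ∑ i ∈ Finset.range (d + 1), (-1 : ℚ) ^ (d - i) * (SC.betti F X i : ℚ)) ∧
    (∀ j ≤ d, (SC.betti F X j : ℚ) ≤ SC.mu F X j) := by
  have hm : X.verts.Nonempty := by
    obtain ⟨s, hs, hc⟩ := hd.1
    have hsne : s.Nonempty := Finset.card_pos.1 (by omega)
    obtain ⟨x, hx⟩ := hsne
    exact ⟨x, Morse.face_subset_verts hs hx⟩
  refine ⟨fun j _ => Morse.strong_ineq F X h2 hm j, Morse.top_eq F X h2 hm d hd, ?_⟩
  intro j _
  cases j with
  | zero =>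
    have h := Morse.strong_ineq F X h2 hm 0
    rw [Finset.sum_range_one, Finset.sum_range_one] at h
    simpa using h
  | succ n =>
    have ha := Morse.strong_ineq F X h2 hm (n+1)
    have hb := Morse.strong_ineq F X h2 hm n
    have h1 := Morse.addsum (fun i => (SC.betti F X i : ℚ)) n
    have h2' := Morse.addsum (fun i => SC.mu F X i) n
    linarith
end
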